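/- arXiv:1604.03154 — 5 statements merged into one kernel-verified Lean document; each statement's English description precedes it below -/
import Mathlib

section
/- Let X be a preordered Banach space that is norm-separable. Then X^C = X^σ: an element x ∈ X** is the →^◦_◦-limit of a d-Cauchy net with terms in X if and only if it is the →^◦_◦-limit of a ≤-increasing sequence with terms in X. -/
open TopologicalSpace ENNReal

/-- A (possibly non-reflexive) transitive relation, used to index nets. -/
def TransRel {ι : Type} (r : ι → ι → Prop) : Prop := ∀ a b c, r a b → r b c → r a c

/-- Directedness of the index relation of a net. -/
def DirRel {ι : Type} (r : ι → ι → Prop) : Prop := ∀ a b, ∃ c, r a c ∧ r b c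

/-- `liminf` of a net of extended nonnegative reals over a directed index:
`sup_γ inf_{γ ≺ δ} a δ`. -/
noncomputable def liminfN {ι : Type} (r : ι → ι → Prop) (a : ι → ℝ≥0∞) : ℝ≥0∞ :=
  ⨆ γ, ⨅ δ, ⨅ _ : r γ δ, a δ

/-- `limsup` of a net of extended nonnegative reals over a directed index:
`inf_γ sup_{γ ≺ δ} a δ`. -/
noncomputable def limsupN {ι : Type} (r : ι → ι → Prop) (a : ι → ℝ≥0∞) : ℝ≥0∞ :=
  ⨅ γ, ⨆ δ, ⨆ _ : r γ δ, a δ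

/-- Convergence of a net in `ℝ≥0∞` to `L`. -/
def TendstoN {ι : Type} (r : ι → ι → Prop) (a : ι → ℝ≥0∞) (L : ℝ≥0∞) : Prop :=
  liminfN r a = L ∧ limsupN r a = L

/-- Convergence of a real-valued net. -/
def TendstoRN {ι : Type} (r : ι → ι → Prop) (a : ι → ℝ) (L : ℝ) : Prop :=
  ∀ ε : ℝ, 0 < ε → ∃ γ₀, ∀ γ, r γ₀ γ → |a γ - L| < ε

/-- A distance: a `[0,∞]`-valued function satisfying the triangle inequality. -/
def IsDistance {X : Type} (d : X → X → ℝ≥0∞) : Prop :=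
  ∀ x y z, d x z ≤ d x y + d y z

/-- `d`-Cauchy net: `lim_γ sup_{γ ≺ δ} d(x_γ, x_δ) = 0`. -/
def DCauchyN {ι X : Type} (r : ι → ι → Prop) (d : X → X → ℝ≥0∞) (x : ι → X) : Prop :=
  ∀ ε : ℝ≥0∞, 0 < ε → ∃ γ₀, ∀ γ δ, r γ₀ γ → r γ δ → d (x γ) (x δ) < ε

/-- `d`-dominating net: `sup_γ lim_{γ ≺ δ} d(x_γ, x_δ) = 0`. -/
def DDomN {ι X : Type} (r : ι → ι → Prop) (d : X → X → ℝ≥0∞) (x : ι → X) : Prop :=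
  ∀ γ, ∀ ε : ℝ≥0∞, 0 < ε → ∃ δ₀, r γ δ₀ ∧ ∀ δ, r δ₀ δ → d (x γ) (x δ) < ε

/-- `x_λ →^◦ l` with holes tested against points of `T`:
`liminf_λ d(x_λ, c) ≥ d(l, c)` for all `c ∈ T`. -/
def UpperConvOn {ι X : Type} (r : ι → ι → Prop) (d : X → X → ℝ≥0∞) (T : Set X)
    (x : ι → X) (l : X) : Prop :=
  ∀ c ∈ T, d l c ≤ liminfN r fun γ => d (x γ) c

/-- `x_λ →_◦ l` with holes tested against points of `T`:
`liminf_λ d(c, x_λ) ≥ d(c, l)` for all `c ∈ T`. -/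
def LowerConvOn {ι X : Type} (r : ι → ι → Prop) (d : X → X → ℝ≥0∞) (T : Set X)
    (x : ι → X) (l : X) : Prop :=
  ∀ c ∈ T, d c l ≤ liminfN r fun γ => d c (x γ)

/-- `x_λ →^◦_◦ l` with holes tested against points of `T`. -/
def BiConvOn {ι X : Type} (r : ι → ι → Prop) (d : X → X → ℝ≥0∞) (T : Set X)
    (x : ι → X) (l : X) : Prop :=
  UpperConvOn r d T x l ∧ LowerConvOn r d T x l

/-- The supremum distance on functions `Q → X`. -/
noncomputable def supD {Q X : Type} (d : X → X → ℝ≥0∞) (f g : Q → X) : ℝ≥0∞ :=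
  ⨆ p, d (f p) (g p)

/-- The upper ball topology `X^•`, generated by the balls `{x | d c x < ε}`. -/
def upperBallTop {X : Type} (d : X → X → ℝ≥0∞) : TopologicalSpace X :=
  TopologicalSpace.generateFrom {s | ∃ c, ∃ ε : ℝ≥0∞, 0 < ε ∧ s = {x | d c x < ε}}

/-- The lower ball topology `X_•`, generated by the balls `{x | d x c < ε}`. -/
def lowerBallTop {X : Type} (d : X → X → ℝ≥0∞) : TopologicalSpace X :=
  TopologicalSpace.generateFrom {s | ∃ c, ∃ ε : ℝ≥0∞, 0 < ε ∧ s = {x | d x c < ε}}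

/-- `X` is `d`-complete: every `d`-Cauchy net has a `→^◦_◦`-limit. -/
def DComplete {X : Type} (d : X → X → ℝ≥0∞) : Prop :=
  ∀ (ι : Type) (r : ι → ι → Prop) (x : ι → X), Nonempty ι → TransRel r → DirRel r →
    DCauchyN r d x → ∃ l, BiConvOn r d Set.univ x l

/-- `y` is `d`-finite: `d(y, x_λ) → d(y, l)` whenever `(x_λ)` is `d`-Cauchy and
`x_λ →^◦_◦ l`. -/
def DFinite {X : Type} (d : X → X → ℝ≥0∞) (y : X) : Prop :=
  ∀ (ι : Type) (r : ι → ι → Prop) (x : ι → X) (l : X), Nonempty ι → TransRel r → DirRel r →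
    DCauchyN r d x → BiConvOn r d Set.univ x l →
      TendstoN r (fun γ => d y (x γ)) (d y l)

/-- The `d`-finite topology `X^{F•}`, generated by upper balls with `d`-finite centres. -/
def dFiniteTop {X : Type} (d : X → X → ℝ≥0∞) : TopologicalSpace X :=
  TopologicalSpace.generateFrom
    {s | ∃ c, DFinite d c ∧ ∃ ε : ℝ≥0∞, 0 < ε ∧ s = {x | d c x < ε}}

-- (base defs assumed above in real files)
/-- The bidual `X**` of a real normed space. -/
abbrev Bidual (X : Type) [NormedAddCommGroup X] [NormedSpace ℝ X] : Type :=
  StrongDual ℝ (StrongDual ℝ X)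

/-- The positive cone of a preordered Banach space: a norm-closed set containing `0`,
closed under nonnegative scaling and addition. -/
def IsGoodCone (X : Type) [NormedAddCommGroup X] [NormedSpace ℝ X] (K : Set X) : Prop :=
  IsClosed K ∧ (0 : X) ∈ K ∧ (∀ r : ℝ, 0 ≤ r → ∀ x ∈ K, r • x ∈ K) ∧
    ∀ x ∈ K, ∀ y ∈ K, x + y ∈ K

/-- `Q = X^{*1}_+`, the positive unit ball of the dual. -/
def posQ (X : Type) [NormedAddCommGroup X] [NormedSpace ℝ X] (K : Set X) :
    Set (StrongDual ℝ X) :=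
  {φ | ‖φ‖ ≤ 1 ∧ ∀ v ∈ K, 0 ≤ φ v}

/-- The canonical hemimetric on `X**`: `d(x,y) = ‖x - y‖_≤ = sup_{φ ∈ Q} φ(x - y)`. -/
noncomputable def ddist {X : Type} [NormedAddCommGroup X] [NormedSpace ℝ X] (K : Set X)
    (x y : Bidual X) : ℝ≥0∞ :=
  ⨆ φ ∈ posQ X K, ENNReal.ofReal ((x - y) φ)

/-- The weak* topology on `Q = X^{*1}_+`. -/
def qTop (X : Type) [NormedAddCommGroup X] [NormedSpace ℝ X] (K : Set X) :
    TopologicalSpace (posQ X K) :=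
  TopologicalSpace.induced (fun φ : posQ X K => fun v : X => φ.1 v) inferInstance

/-- `x ∈ X^S`: the restriction of `x ∈ X**` to `Q` is weak* lower semicontinuous. -/
def lscS {X : Type} [NormedAddCommGroup X] [NormedSpace ℝ X] (K : Set X)
    (x : Bidual X) : Prop :=
  @LowerSemicontinuous (posQ X K) ℝ (qTop X K) _ fun φ => x φ.1

/-- `B^{<∞}`: the bounded functions `Q → X**`. -/
def Bset (X : Type) [NormedAddCommGroup X] [NormedSpace ℝ X] (Q : Type) :
    Set (Q → Bidual X) := {f | ∃ M, ∀ p, ‖f p‖ ≤ M}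

/-- The upper ball topology on `X^S`, generated by the balls
`{y | d(c, y) < ε}` for `c ∈ X^S`. -/
def upTopXS {X : Type} [NormedAddCommGroup X] [NormedSpace ℝ X] (K : Set X) :
    TopologicalSpace {x : Bidual X // lscS K x} :=
  TopologicalSpace.generateFrom
    {s | ∃ c : {x : Bidual X // lscS K x}, ∃ ε : ℝ≥0∞, 0 < ε ∧ s = {y | ddist K c.1 y.1 < ε}}

/-- `f ∈ S`: a bounded function `Q → X**` taking values in `X^S` that is continuous
into `X^S` with its upper ball topology. -/
def MemS {X : Type} [NormedAddCommGroup X] [NormedSpace ℝ X] (K : Set X)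
    {Q : Type} [TopologicalSpace Q] (f : Q → Bidual X) : Prop :=
  f ∈ Bset X Q ∧ ∃ h : ∀ p, lscS K (f p),
    @Continuous Q {x : Bidual X // lscS K x} _ (upTopXS K) fun p => ⟨f p, h p⟩


section stmt10aux
open Pointwise
variable {X : Type} [NormedAddCommGroup X] [NormedSpace ℝ X] {K : Set X}

lemma ofReal_le_ddist {a b : Bidual X} {φ : StrongDual ℝ X} (hφ : φ ∈ posQ X K) :
    ENNReal.ofReal ((a - b) φ) ≤ ddist K a b :=
  le_iSup₂ (f := fun φ (_ : φ ∈ posQ X K) => ENNReal.ofReal ((a - b) φ)) φ hφ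

lemma ddist_le_of_forall {a b : Bidual X} {t : ℝ}
    (h : ∀ φ ∈ posQ X K, (a - b) φ ≤ t) : ddist K a b ≤ ENNReal.ofReal t :=
  iSup₂_le fun φ hφ => ENNReal.ofReal_le_ofReal (h φ hφ)

lemma pt_le_of_ddist_le {a b : Bidual X} {t : ℝ} (ht : 0 ≤ t)
    (h : ddist K a b ≤ ENNReal.ofReal t) {φ : StrongDual ℝ X} (hφ : φ ∈ posQ X K) :
    (a - b) φ ≤ t := by
  by_contra hc
  push_neg at hc
  have h1 : ENNReal.ofReal t < ENNReal.ofReal ((a - b) φ) :=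
    (ENNReal.ofReal_lt_ofReal_iff (lt_of_le_of_lt ht hc)).2 hc
  exact absurd (le_trans (ofReal_le_ddist hφ) h) (not_le.2 h1)

lemma sub_apply_J (a : X) (c : Bidual X) (φ : StrongDual ℝ X) :
    (NormedSpace.inclusionInDoubleDual ℝ X a - c) φ = φ a - c φ := by
  rw [ContinuousLinearMap.sub_apply, NormedSpace.dual_def]

lemma sub_apply_J' (a : X) (c : Bidual X) (φ : StrongDual ℝ X) :
    (c - NormedSpace.inclusionInDoubleDual ℝ X a) φ = c φ - φ a := by
  rw [ContinuousLinearMap.sub_apply, NormedSpace.dual_def]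

lemma sub_apply_JJ (a b : X) (φ : StrongDual ℝ X) :
    (NormedSpace.inclusionInDoubleDual ℝ X a - NormedSpace.inclusionInDoubleDual ℝ X b) φ
      = φ a - φ b := by
  rw [ContinuousLinearMap.sub_apply, NormedSpace.dual_def, NormedSpace.dual_def]

lemma phi_le_norm {φ : StrongDual ℝ X} (hφ : φ ∈ posQ X K) (w : X) : φ w ≤ ‖w‖ := by
  have := φ.le_opNorm w
  have h2 := le_trans (le_abs_self (φ w)) this
  nlinarith [norm_nonneg w, hφ.1, φ.le_opNorm w]


/-- Quantitative Hahn–Banach separation from the cone. -/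
lemma exists_cone_approx (hK : IsGoodCone X K) (v : X) (t : ℝ) (ht : 0 ≤ t)
    (h : ∀ φ ∈ posQ X K, φ v ≤ t) (ε : ℝ) (hε : 0 < ε) :
    ∃ u ∈ K, ‖v + u‖ ≤ t + ε := by
  by_contra hcon
  push_neg at hcon
  set s : Set X := (-K) + Metric.ball (0 : X) (t + ε) with hs
  have htε : 0 < t + ε := by linarith
  have hKconv : Convex ℝ K := by
    intro p hp q hq a b ha hb _
    exact hK.2.2.2 _ (hK.2.2.1 a ha p hp) _ (hK.2.2.1 b hb q hq)
  have hsconv : Convex ℝ s := Convex.add hKconv.neg (convex_ball 0 (t + ε))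
  have hsopen : IsOpen s := IsOpen.add_left Metric.isOpen_ball
  have hvs : v ∉ s := by
    rintro ⟨w, hw, b, hb, rfl⟩
    have hw' : -w ∈ K := Set.mem_neg.1 hw
    have h1 := hcon (-w) hw'
    have h2 : ‖w + b + -w‖ = ‖b‖ := by
      have : w + b + -w = b := by abel
      rw [this]
    rw [h2] at h1
    have := mem_ball_zero_iff.1 hb
    linarith
  obtain ⟨f, hf⟩ := geometric_hahn_banach_open_point hsconv hsopen hvs
  have hmem : ∀ u ∈ K, ∀ b ∈ Metric.ball (0 : X) (t + ε), -u + b ∈ s := by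
    intro u hu b hb
    exact Set.add_mem_add (Set.neg_mem_neg.2 hu) hb
  have h0s : (0 : X) ∈ s := by
    have := hmem 0 hK.2.1 0 (by simpa using htε)
    simpa using this
  have hfv : 0 < f v := by
    have := hf 0 h0s
    simpa using this
  have hfK : ∀ u ∈ K, 0 ≤ f u := by
    intro u hu
    by_contra hneg
    push_neg at hneg
    set c : ℝ := (f v + 1) / (-(f u)) with hc
    have hfu : 0 < -(f u) := by linarith
    have hcpos : 0 < c := by positivity
    have hcu : c • u ∈ K := hK.2.2.1 c hcpos.le u hu
    have := hf _ (hmem _ hcu 0 (by simpa using htε))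
    simp only [add_zero, map_neg, map_smul, smul_eq_mul] at this
    have hcalc : -(c * f u) = f v + 1 := by
      have hne : f u ≠ 0 := ne_of_lt hneg
      rw [hc]
      field_simp
    rw [hcalc] at this
    linarith
  have hnorm : ‖f‖ * (t + ε) ≤ f v := by
    have hb : ∀ b : X, ‖b‖ < t + ε → f b < f v := by
      intro b hb
      have := hf _ (hmem 0 hK.2.1 b (mem_ball_zero_iff.2 hb))
      simpa using this
    have key : ∀ b : X, |f b| ≤ (f v / (t + ε)) * ‖b‖ := by
      intro b
      rcases eq_or_ne b 0 with rfl | hb0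
      · simp
      have hbn : 0 < ‖b‖ := norm_pos_iff.2 hb0
      have main : ∀ ρ : ℝ, 0 < ρ → ρ < 1 → |f b| * (ρ * (t + ε)) ≤ f v * ‖b‖ := by
        intro ρ hρ hρ1
        set b' : X := (ρ * (t + ε) / ‖b‖) • b with hb'
        have hb'n : ‖b'‖ = ρ * (t + ε) := by
          rw [hb', norm_smul, Real.norm_eq_abs, abs_of_pos (by positivity)]
          field_simp
        have hlt : ‖b'‖ < t + ε := by
          rw [hb'n]; nlinarith
        have h1 := hb b' hlt
        have h2 := hb (-b') (by simpa using hlt)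
        rw [map_neg] at h2
        have habs : |f b'| < f v := abs_lt.2 ⟨by linarith, h1⟩
        rw [hb', map_smul, smul_eq_mul, abs_mul, abs_of_pos (by positivity)] at habs
        have : ρ * (t + ε) / ‖b‖ * |f b| * ‖b‖ ≤ f v * ‖b‖ := by nlinarith
        calc |f b| * (ρ * (t + ε)) = ρ * (t + ε) / ‖b‖ * |f b| * ‖b‖ := by
              field_simp
          _ ≤ f v * ‖b‖ := this
      have hle : |f b| * (t + ε) ≤ f v * ‖b‖ := by
        by_contra hcc
        push_neg at hcc
        rcases eq_or_lt_of_le (abs_nonneg (f b)) with h0 | hfb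
        · rw [← h0] at hcc; simp at hcc; nlinarith
        set ρ := (f v * ‖b‖ / (t + ε) + |f b|) / (2 * |f b|) with hρdef
        have hA : 0 ≤ f v * ‖b‖ / (t + ε) := by positivity
        have hAlt : f v * ‖b‖ / (t + ε) < |f b| := by
          rw [div_lt_iff₀ htε]; linarith
        have hρpos : 0 < ρ := by positivity
        have hρlt : ρ < 1 := by
          rw [hρdef, div_lt_one (by positivity)]; linarith
        have hm := main ρ hρpos hρlt
        have hexp : |f b| * (ρ * (t + ε)) = (f v * ‖b‖ / (t + ε) + |f b|) / 2 * (t + ε) := by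
          rw [hρdef]; field_simp
        rw [hexp] at hm
        have : (f v * ‖b‖ / (t + ε)) * (t + ε) = f v * ‖b‖ := by field_simp
        nlinarith
      rw [div_mul_eq_mul_div, le_div_iff₀ htε]
      linarith
    have hop : ‖f‖ ≤ f v / (t + ε) := by
      apply ContinuousLinearMap.opNorm_le_bound _ (by positivity)
      intro b
      rw [Real.norm_eq_abs]
      exact key b
    calc ‖f‖ * (t + ε) ≤ (f v / (t + ε)) * (t + ε) := by nlinarith
      _ = f v := by field_simp
  have hfpos : 0 < ‖f‖ := by
    by_contra h0
    push_neg at h0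
    have h00 : ‖f‖ = 0 := le_antisymm h0 (norm_nonneg f)
    have h01 : |f v| ≤ ‖f‖ * ‖v‖ := f.le_opNorm v
    rw [h00, zero_mul] at h01
    have := le_trans (le_abs_self _) h01
    linarith
  set φ : StrongDual ℝ X := ‖f‖⁻¹ • f with hφdef
  have hφQ : φ ∈ posQ X K := by
    constructor
    · rw [hφdef, norm_smul, norm_inv, norm_norm]
      rw [inv_mul_cancel₀ (ne_of_gt hfpos)]
    · intro u hu
      rw [hφdef]
      simp only [ContinuousLinearMap.smul_apply, smul_eq_mul]
      exact mul_nonneg (by positivity) (hfK u hu)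
  have hφv := h φ hφQ
  have : φ v = ‖f‖⁻¹ * f v := by rw [hφdef]; simp
  rw [this] at hφv
  have h2 : ‖f‖⁻¹ * (‖f‖ * (t + ε)) ≤ ‖f‖⁻¹ * f v :=
    mul_le_mul_of_nonneg_left hnorm (by positivity)
  rw [← mul_assoc, inv_mul_cancel₀ hfpos.ne', one_mul] at h2
  linarith

end stmt10aux

lemma forward {X : Type} [NormedAddCommGroup X] [NormedSpace ℝ X] [CompleteSpace X]
    [TopologicalSpace.SeparableSpace X]
    (K : Set X) (hK : IsGoodCone X K) (x : Bidual X) (ι : Type) (r : ι → ι → Prop)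
    (y : ι → X) (hne : Nonempty ι) (htrans : TransRel r) (hdir : DirRel r)
    (hcauchy : DCauchyN r (ddist K) (fun i => NormedSpace.inclusionInDoubleDual ℝ X (y i)))
    (hbc : BiConvOn r (ddist K) Set.univ
      (fun i => NormedSpace.inclusionInDoubleDual ℝ X (y i)) x) :
    ∃ z : ℕ → X, (∀ n m : ℕ, n ≤ m → z m - z n ∈ K) ∧
      BiConvOn (fun n m : ℕ => n ≤ m) (ddist K) Set.univ
        (fun n => NormedSpace.inclusionInDoubleDual ℝ X (z n)) x := by
  classical
  obtain ⟨i0⟩ := hne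
  set J : X → Bidual X := fun w => NormedSpace.inclusionInDoubleDual ℝ X w with hJ
  obtain ⟨hupper, hlower⟩ := hbc
  -- Cauchy thresholds
  have hpos : ∀ k : ℕ, (0 : ℝ≥0∞) < ENNReal.ofReal ((1/2 : ℝ)^k) := by
    intro k; exact ENNReal.ofReal_pos.2 (by positivity)
  choose g0 hg0 using fun k : ℕ => hcauchy (ENNReal.ofReal ((1/2 : ℝ)^k)) (hpos k)
  -- upper bounds in the directed set
  choose ub hub1 hub2 using hdir
  -- pointwise Cauchy estimate
  have cauchyPt : ∀ (k : ℕ) (γ δ : ι), r (g0 k) γ → r γ δ →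
      ∀ φ ∈ posQ X K, φ (y γ) - φ (y δ) ≤ (1/2 : ℝ)^k := by
    intro k γ δ h1 h2 φ hφ
    have := (hg0 k γ δ h1 h2).le
    have hpt := pt_le_of_ddist_le (by positivity) this hφ
    rwa [sub_apply_JJ] at hpt
  -- eventual upper bound by x (step 2)
  have step2 : ∀ (k : ℕ) (δ' : ι), r (g0 k) δ' →
      ∀ φ ∈ posQ X K, φ (y δ') - x φ ≤ (1/2 : ℝ)^k := by
    intro k δ' hδ' φ hφ
    have hlow := hlower (J (y δ')) (Set.mem_univ _)
    have hbound : liminfN r (fun γ' => ddist K (J (y δ')) (J (y γ')))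
        ≤ ENNReal.ofReal ((1/2 : ℝ)^k) := by
      apply iSup_le
      intro γ
      exact iInf_le_of_le (ub γ δ') (iInf_le_of_le (hub1 γ δ')
        (hg0 k δ' (ub γ δ') hδ' (hub2 γ δ')).le)
    have := le_trans hlow hbound
    have hpt := pt_le_of_ddist_le (by positivity) this hφ
    rwa [sub_apply_J] at hpt
  -- dense sequence
  haveI : Nonempty X := ⟨0⟩
  obtain ⟨v, hv⟩ := TopologicalSpace.exists_dense_seq X
  -- the catalogue of witnesses
  have hDex : ∀ t : ℕ × ℕ × ℚ, ∃ δ : ι,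
      (∃ δ', r (g0 t.2.1) δ' ∧ ‖y δ' - v t.1‖ < (t.2.2 : ℝ)) →
        (r (g0 t.2.1) δ ∧ ‖y δ - v t.1‖ < (t.2.2 : ℝ)) := by
    intro t
    by_cases h : ∃ δ', r (g0 t.2.1) δ' ∧ ‖y δ' - v t.1‖ < (t.2.2 : ℝ)
    · obtain ⟨δ', hδ'⟩ := h; exact ⟨δ', fun _ => hδ'⟩
    · exact ⟨i0, fun hh => absurd hh h⟩
  choose Dfun hDfun using hDex
  obtain ⟨T, hT⟩ := exists_surjective_nat (ℕ × ℕ × ℚ)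
  -- the chain
  set γc : ℕ → ι := fun m => Nat.rec (ub (g0 0) (Dfun (T 0)))
    (fun m prev => ub (ub prev (g0 (m+1))) (Dfun (T (m+1)))) m with hγc
  have hγstep : ∀ m, r (γc m) (γc (m+1)) := by
    intro m
    exact htrans _ _ _ (hub1 (γc m) (g0 (m+1))) (hub1 _ (Dfun (T (m+1))))
  have hγg0 : ∀ m, r (g0 m) (γc m) := by
    intro m
    cases m with
    | zero => exact hub1 _ _
    | succ m => exact htrans _ _ _ (hub2 (γc m) (g0 (m+1))) (hub1 _ (Dfun (T (m+1))))
  have hγD : ∀ m, r (Dfun (T m)) (γc m) := by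
    intro m
    cases m with
    | zero => exact hub2 _ _
    | succ m => exact hub2 _ _
  have hγle : ∀ m m', m < m' → r (γc m) (γc m') := by
    intro m m' h
    induction m' with
    | zero => omega
    | succ n ih =>
      rcases Nat.lt_succ_iff_lt_or_eq.1 h with h' | h'
      · exact htrans _ _ _ (ih h') (hγstep n)
      · rw [h']; exact hγstep n
  have hγDle : ∀ t m, t ≤ m → r (Dfun (T t)) (γc m) := by
    intro t m h
    rcases eq_or_lt_of_le h with rfl | h'
    · exact hγD t
    · exact htrans _ _ _ (hγD t) (hγle t m h')
  -- corrections
  have hcor : ∀ m : ℕ, ∃ u ∈ K,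
      ‖(y (γc m) - y (γc (m+1))) + u‖ ≤ (1/2 : ℝ)^m + (1/2 : ℝ)^m := by
    intro m
    apply exists_cone_approx hK _ _ (by positivity) _ _ (by positivity)
    intro φ hφ
    rw [map_sub]
    exact cauchyPt m _ _ (hγg0 m) (hγstep m) φ hφ
  choose u hu1 hu2 using hcor
  set e : ℕ → X := fun m => y (γc (m+1)) - y (γc m) - u m with he
  have he_norm : ∀ m, ‖e m‖ ≤ 2 * (1/2 : ℝ)^m := by
    intro m
    have : e m = -((y (γc m) - y (γc (m+1))) + u m) := by rw [he]; abel
    rw [this, norm_neg]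
    calc ‖(y (γc m) - y (γc (m+1))) + u m‖ ≤ (1/2 : ℝ)^m + (1/2 : ℝ)^m := hu2 m
      _ = 2 * (1/2 : ℝ)^m := by ring
  -- summability
  have hgeo : Summable (fun j : ℕ => (1/2 : ℝ)^j) :=
    summable_geometric_of_lt_one (by norm_num) (by norm_num)
  have hsum : ∀ m : ℕ, Summable fun j => e (m + j) := by
    intro m
    apply Summable.of_norm_bounded (g := fun j => (2 * (1/2 : ℝ)^m) * (1/2 : ℝ)^j)
    · exact hgeo.mul_left _
    · intro j
      calc ‖e (m + j)‖ ≤ 2 * (1/2 : ℝ)^(m+j) := he_norm (m + j)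
        _ = (2 * (1/2 : ℝ)^m) * (1/2 : ℝ)^j := by rw [pow_add]; ring
  set S : ℕ → X := fun m => ∑' j, e (m + j) with hS
  have hSnorm : ∀ m, ‖S m‖ ≤ 4 * (1/2 : ℝ)^m := by
    intro m
    have h1 : ‖S m‖ ≤ ∑' j, ‖e (m + j)‖ := by
      apply norm_tsum_le_tsum_norm
      apply Summable.of_nonneg_of_le (fun j => norm_nonneg _)
        (fun j => by
          calc ‖e (m + j)‖ ≤ 2 * (1/2 : ℝ)^(m+j) := he_norm (m + j)
            _ = (2 * (1/2 : ℝ)^m) * (1/2 : ℝ)^j := by rw [pow_add]; ring)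
        (hgeo.mul_left _)
    have h2 : ∑' j, ‖e (m + j)‖ ≤ ∑' j, (2 * (1/2 : ℝ)^m) * (1/2 : ℝ)^j := by
      apply Summable.tsum_le_tsum
      · intro j
        calc ‖e (m + j)‖ ≤ 2 * (1/2 : ℝ)^(m+j) := he_norm (m + j)
          _ = (2 * (1/2 : ℝ)^m) * (1/2 : ℝ)^j := by rw [pow_add]; ring
      · apply Summable.of_nonneg_of_le (fun j => norm_nonneg _)
          (fun j => by
            calc ‖e (m + j)‖ ≤ 2 * (1/2 : ℝ)^(m+j) := he_norm (m + j)
              _ = (2 * (1/2 : ℝ)^m) * (1/2 : ℝ)^j := by rw [pow_add]; ring)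
          (hgeo.mul_left _)
      · exact hgeo.mul_left _
    have h3 : ∑' j, (2 * (1/2 : ℝ)^m) * (1/2 : ℝ)^j = 4 * (1/2 : ℝ)^m := by
      rw [tsum_mul_left, tsum_geometric_of_lt_one (by norm_num) (by norm_num)]
      norm_num
      ring
    linarith
  have hSrec : ∀ m, S m = e m + S (m+1) := by
    intro m
    have h1 : S m = e (m + 0) + ∑' j, e (m + (j + 1)) := Summable.tsum_eq_zero_add (hsum m)
    have h2 : ∑' j, e (m + (j + 1)) = ∑' j, e ((m + 1) + j) :=
      tsum_congr fun j => by rw [show m + (j + 1) = (m + 1) + j from by omega]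
    have h3 : S (m+1) = ∑' j, e ((m + 1) + j) := rfl
    rw [h1, h2, ← h3, Nat.add_zero]
  set z : ℕ → X := fun m => y (γc m) + S m with hz
  have hzstep : ∀ m, z (m+1) - z m = u m := by
    intro m
    have h1 : e m = y (γc (m+1)) - y (γc m) - u m := rfl
    have h0 : z (m+1) - z m = (y (γc (m+1)) + S (m+1)) - (y (γc m) + S m) := rfl
    rw [h0, hSrec m, h1]
    abel
  have hzmono : ∀ n m : ℕ, n ≤ m → z m - z n ∈ K := by
    intro n m h
    induction m with
    | zero =>
      have : n = 0 := by omega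
      subst this
      simpa using hK.2.1
    | succ m ih =>
      rcases eq_or_lt_of_le h with h' | h'
      · subst h'
        simpa using hK.2.1
      · have h3 : n ≤ m := by omega
        have h2 : z (m+1) - z n = (z (m+1) - z m) + (z m - z n) := by abel
        rw [h2, hzstep m]
        exact hK.2.2.2 _ (hu1 m) _ (ih h3)
  -- pointwise monotonicity
  have hφmono : ∀ φ ∈ posQ X K, ∀ n m : ℕ, n ≤ m → φ (z n) ≤ φ (z m) := by
    intro φ hφ n m h
    have h1 : 0 ≤ φ (z m - z n) := hφ.2 _ (hzmono n m h)
    rw [map_sub] at h1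
    linarith
  -- z is below x pointwise
  have hzlex : ∀ φ ∈ posQ X K, ∀ m : ℕ, φ (z m) ≤ x φ := by
    intro φ hφ m
    by_contra hc
    push_neg at hc
    obtain ⟨N, hN⟩ := exists_pow_lt_of_lt_one (x := (φ (z m) - x φ)/5) (by linarith)
      (show (1/2 : ℝ) < 1 by norm_num)
    set m' := max m N with hm'
    have hle : (1/2 : ℝ)^m' ≤ (1/2 : ℝ)^N :=
      pow_le_pow_of_le_one (by norm_num) (by norm_num) (le_max_right m N)
    have h1 : φ (z m) ≤ φ (z m') := hφmono φ hφ m m' (le_max_left m N)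
    have h2 : φ (z m') = φ (y (γc m')) + φ (S m') := by
      have hz2 : z m' = y (γc m') + S m' := rfl
      rw [hz2, map_add]
    have h3 : φ (y (γc m')) - x φ ≤ (1/2 : ℝ)^m' := step2 m' (γc m') (hγg0 m') φ hφ
    have h4 : φ (S m') ≤ ‖S m'‖ := phi_le_norm hφ _
    have h5 : ‖S m'‖ ≤ 4 * (1/2 : ℝ)^m' := hSnorm m'
    linarith
  refine ⟨z, hzmono, ?_, ?_⟩
  · -- UpperConvOn
    intro c _
    have keyB : ddist K x c ≤ ⨆ m, ddist K (NormedSpace.inclusionInDoubleDual ℝ X (z m)) c := by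
      refine le_trans (hupper c (Set.mem_univ c)) ?_
      apply ENNReal.le_of_forall_pos_le_add
      intro ε' hε' _
      have hεr : (0 : ℝ) < (ε' : ℝ)/2 := by
        have : (0:ℝ) < (ε' : ℝ) := hε'
        linarith
      set εr : ℝ := (ε' : ℝ)/2 with hεrdef
      obtain ⟨k, hk⟩ := exists_pow_lt_of_lt_one (x := εr/2) (by linarith)
        (show (1/2 : ℝ) < 1 by norm_num)
      have main : liminfN r (fun γ => ddist K (NormedSpace.inclusionInDoubleDual ℝ X (y γ)) c)
          ≤ (⨆ m, ddist K (NormedSpace.inclusionInDoubleDual ℝ X (z m)) c)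
            + ENNReal.ofReal ((1/2 : ℝ)^k + εr) := by
        apply iSup_le
        intro γ
        set δs := ub γ (g0 k) with hδs
        obtain ⟨j, hj⟩ := hv.exists_dist_lt (y δs) (show (0:ℝ) < εr/8 by linarith)
        rw [dist_eq_norm] at hj
        obtain ⟨q, hq1, hq2⟩ := exists_rat_btwn hj
        obtain ⟨t, ht'⟩ := hT (j, k, q)
        have hin : ∃ δ', r (g0 k) δ' ∧ ‖y δ' - v j‖ < (q : ℝ) := ⟨δs, hub2 γ (g0 k), hq1⟩
        have hspec := hDfun (j, k, q) hin
        obtain ⟨N2, hN2⟩ := exists_pow_lt_of_lt_one (x := εr/8) (by linarith)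
          (show (1/2 : ℝ) < 1 by norm_num)
        set m := max t N2 with hm
        have hDm : r (Dfun (j, k, q)) (γc m) := by
          have := hγDle t m (le_max_left _ _)
          rwa [ht'] at this
        have hSm : ‖S m‖ ≤ εr/2 := by
          have h1 : (1/2 : ℝ)^m ≤ (1/2 : ℝ)^N2 :=
            pow_le_pow_of_le_one (by norm_num) (by norm_num) (le_max_right t N2)
          have := hSnorm m
          linarith
        have hpt : ∀ φ ∈ posQ X K,
            (NormedSpace.inclusionInDoubleDual ℝ X (y δs) - c) φ
              ≤ (NormedSpace.inclusionInDoubleDual ℝ X (z m) - c) φ + ((1/2 : ℝ)^k + εr) := by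
          intro φ hφ
          rw [sub_apply_J, sub_apply_J]
          have e1 : φ (y δs) - φ (v j) ≤ (q : ℝ) := by
            have h' := phi_le_norm hφ (y δs - v j)
            rw [map_sub] at h'
            linarith
          have e2 : φ (v j) - φ (y (Dfun (j, k, q))) ≤ (q : ℝ) := by
            have h' := phi_le_norm hφ (v j - y (Dfun (j, k, q)))
            rw [map_sub] at h'
            have h'' : ‖v j - y (Dfun (j, k, q))‖ = ‖y (Dfun (j, k, q)) - v j‖ := norm_sub_rev _ _
            rw [h''] at h'
            linarith [hspec.2]
          have e3 : φ (y (Dfun (j, k, q))) - φ (y (γc m)) ≤ (1/2 : ℝ)^k :=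
            cauchyPt k _ _ hspec.1 hDm φ hφ
          have e4 : φ (y (γc m)) = φ (z m) - φ (S m) := by
            have hz2 : z m = y (γc m) + S m := rfl
            rw [hz2, map_add]
            ring
          have e5 : -φ (S m) ≤ ‖S m‖ := by
            have h' := phi_le_norm hφ (-(S m))
            rw [map_neg] at h'
            rw [norm_neg] at h'
            linarith
          have hq8 : (q : ℝ) < εr/8 := hq2
          linarith
        have hdd : ddist K (NormedSpace.inclusionInDoubleDual ℝ X (y δs)) c
            ≤ (⨆ m, ddist K (NormedSpace.inclusionInDoubleDual ℝ X (z m)) c)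
              + ENNReal.ofReal ((1/2 : ℝ)^k + εr) := by
          apply iSup₂_le
          intro φ hφ
          calc ENNReal.ofReal ((NormedSpace.inclusionInDoubleDual ℝ X (y δs) - c) φ)
              ≤ ENNReal.ofReal ((NormedSpace.inclusionInDoubleDual ℝ X (z m) - c) φ
                  + ((1/2 : ℝ)^k + εr)) := ENNReal.ofReal_le_ofReal (hpt φ hφ)
            _ ≤ ENNReal.ofReal ((NormedSpace.inclusionInDoubleDual ℝ X (z m) - c) φ)
                  + ENNReal.ofReal ((1/2 : ℝ)^k + εr) := ENNReal.ofReal_add_le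
            _ ≤ ddist K (NormedSpace.inclusionInDoubleDual ℝ X (z m)) c
                  + ENNReal.ofReal ((1/2 : ℝ)^k + εr) :=
                add_le_add_left (ofReal_le_ddist hφ) _
            _ ≤ (⨆ m, ddist K (NormedSpace.inclusionInDoubleDual ℝ X (z m)) c)
                  + ENNReal.ofReal ((1/2 : ℝ)^k + εr) :=
                add_le_add_left
                  (le_iSup (fun m => ddist K (NormedSpace.inclusionInDoubleDual ℝ X (z m)) c) m) _
        exact iInf_le_of_le δs (iInf_le_of_le (hub1 γ (g0 k)) hdd)
      refine le_trans main ?_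
      have hof : ENNReal.ofReal ((1/2 : ℝ)^k + εr) ≤ (ε' : ℝ≥0∞) := by
        rw [← ENNReal.ofReal_coe_nnreal]
        apply ENNReal.ofReal_le_ofReal
        linarith
      exact add_le_add_right hof _
    refine le_trans keyB ?_
    apply iSup_le
    intro m
    refine le_iSup_of_le m (le_iInf fun n => le_iInf fun hn => ?_)
    apply iSup₂_le
    intro φ hφ
    have h2 : (NormedSpace.inclusionInDoubleDual ℝ X (z m) - c) φ
        ≤ (NormedSpace.inclusionInDoubleDual ℝ X (z n) - c) φ := by
      rw [sub_apply_J, sub_apply_J]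
      have := hφmono φ hφ m n hn
      linarith
    exact le_trans (ENNReal.ofReal_le_ofReal h2) (ofReal_le_ddist hφ)
  · -- LowerConvOn
    intro c _
    have hterm : ∀ n : ℕ, ddist K c x ≤ ddist K c (NormedSpace.inclusionInDoubleDual ℝ X (z n)) := by
      intro n
      apply iSup₂_le
      intro φ hφ
      have h1 : (c - x) φ ≤ (c - NormedSpace.inclusionInDoubleDual ℝ X (z n)) φ := by
        rw [sub_apply_J', ContinuousLinearMap.sub_apply]
        have := hzlex φ hφ n
        linarith
      exact le_trans (ENNReal.ofReal_le_ofReal h1) (ofReal_le_ddist hφ)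
    exact le_iSup_of_le 0 (le_iInf fun n => le_iInf fun _ => hterm n)


/-- if `X` is norm-separable then `X^C = X^σ`: `x ∈ X**` is the
`→^◦_◦`-limit of a `d`-Cauchy net with terms in `X` iff it is the `→^◦_◦`-limit of a
`≤`-increasing sequence with terms in `X`. -/
theorem stmt10 (X : Type) [NormedAddCommGroup X] [NormedSpace ℝ X] [CompleteSpace X]
    [TopologicalSpace.SeparableSpace X]
    (K : Set X) (hK : IsGoodCone X K) (x : Bidual X) :
    (∃ (ι : Type) (r : ι → ι → Prop) (y : ι → X),
      Nonempty ι ∧ TransRel r ∧ DirRel r ∧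
      DCauchyN r (ddist K) (fun i => NormedSpace.inclusionInDoubleDual ℝ X (y i)) ∧
      BiConvOn r (ddist K) Set.univ
        (fun i => NormedSpace.inclusionInDoubleDual ℝ X (y i)) x) ↔
    (∃ y : ℕ → X, (∀ n m : ℕ, n ≤ m → y m - y n ∈ K) ∧
      BiConvOn (fun n m : ℕ => n ≤ m) (ddist K) Set.univ
        (fun n => NormedSpace.inclusionInDoubleDual ℝ X (y n)) x) := by
  constructor
  · rintro ⟨ι, r, y, hne, htrans, hdir, hcauchy, hbc⟩
    exact forward K hK x ι r y hne htrans hdir hcauchy hbc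
  · rintro ⟨y, hmono, hbc⟩
    refine ⟨ℕ, (fun n m => n ≤ m), y, ⟨0⟩, ?_, ?_, ?_, hbc⟩
    · intro a b c h1 h2
      omega
    · intro a b
      exact ⟨max a b, le_max_left _ _, le_max_right _ _⟩
    · intro ε hε
      refine ⟨0, fun γ δ _ hγδ => ?_⟩
      have h0 : ddist K (NormedSpace.inclusionInDoubleDual ℝ X (y γ))
          (NormedSpace.inclusionInDoubleDual ℝ X (y δ)) = 0 := by
        apply le_antisymm _ (zero_le)
        apply iSup₂_le
        intro φ hφ
        have h1 : (NormedSpace.inclusionInDoubleDual ℝ X (y γ)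
            - NormedSpace.inclusionInDoubleDual ℝ X (y δ)) φ ≤ 0 := by
          rw [sub_apply_JJ]
          have h2 : 0 ≤ φ (y δ - y γ) := hφ.2 _ (hmono γ δ hγδ)
          rw [map_sub] at h2
          linarith
        exact le_of_eq (ENNReal.ofReal_eq_zero.2 h1)
      rw [h0]
      exact hε
end

section
/- Let X be a preordered Banach space whose unit ball X^1 is ≤-bounded, i.e. there exists b ∈ X with x ≤ b for all x ∈ X^1. Then X^C = X^m: an element x ∈ X** is the →^◦_◦-limit of a d-Cauchy net with terms in X if and only if it is the →^◦_◦-limit of a ≤-increasing net with terms in X. -/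
open TopologicalSpace ENNReal

section helpers
variable {X : Type} [NormedAddCommGroup X] [NormedSpace ℝ X] {K : Set X}

lemma le_ddist {a c : Bidual X} {φ : StrongDual ℝ X} (hφ : φ ∈ posQ X K) :
    ENNReal.ofReal ((a - c) φ) ≤ ddist K a c :=
  le_iSup₂ (f := fun φ (_ : φ ∈ posQ X K) => ENNReal.ofReal ((a - c) φ)) φ hφ

lemma ddist_le_ofReal {a c : Bidual X} {t : ℝ}
    (h : ∀ φ ∈ posQ X K, (a - c) φ ≤ t) : ddist K a c ≤ ENNReal.ofReal t :=
  iSup₂_le fun φ hφ => ENNReal.ofReal_le_ofReal (h φ hφ)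

lemma apply_le_of_ddist_le {a c : Bidual X} {t : ℝ} (ht : 0 ≤ t)
    (h : ddist K a c ≤ ENNReal.ofReal t) : ∀ φ ∈ posQ X K, (a - c) φ ≤ t :=
  fun φ hφ => (ENNReal.ofReal_le_ofReal_iff ht).1 ((le_ddist hφ).trans h)

lemma ddist_triangle (a b c : Bidual X) : ddist K a c ≤ ddist K a b + ddist K b c := by
  refine iSup₂_le fun φ hφ => ?_
  have : (a - c) φ = (a - b) φ + (b - c) φ := by
    simp [ContinuousLinearMap.sub_apply]
  rw [this]
  exact (ENNReal.ofReal_add_le).trans (add_le_add (le_ddist hφ) (le_ddist hφ))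

lemma ddist_eq_zero {a c : Bidual X} (h : ∀ φ ∈ posQ X K, (a - c) φ ≤ 0) :
    ddist K a c = 0 :=
  le_antisymm (by simpa using ddist_le_ofReal h) (zero_le)

variable (hK : IsGoodCone X K) {b : X} (hb : ∀ x : X, ‖x‖ ≤ 1 → b - x ∈ K)
include hK hb

lemma bK : b ∈ K := by simpa using hb 0 (by simp)

lemma norm_le_apply_b {φ : StrongDual ℝ X} (hφ : φ ∈ posQ X K) : ‖φ‖ ≤ φ b := by
  have h0 : 0 ≤ φ b := hφ.2 b (bK hK hb)
  refine φ.opNorm_le_bound h0 fun v => ?_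
  rcases eq_or_ne v 0 with rfl | hv
  · simp [h0]
  · have hnv : 0 < ‖v‖ := norm_pos_iff.2 hv
    have hu1 : ‖‖v‖⁻¹ • v‖ = 1 := norm_smul_inv_norm hv
    have h1 : φ (‖v‖⁻¹ • v) ≤ φ b := by
      have := hφ.2 _ (hb (‖v‖⁻¹ • v) hu1.le)
      simpa [sub_nonneg] using this
    have h2 : -(‖v‖⁻¹ * φ v) ≤ φ b := by
      have := hφ.2 _ (hb (-(‖v‖⁻¹ • v)) (by rw [norm_neg]; exact hu1.le))
      simp only [map_sub, map_neg, map_smul, smul_eq_mul] at this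
      linarith
    rw [map_smul, smul_eq_mul] at h1
    have e : ‖v‖⁻¹ * φ v * ‖v‖ = φ v := by field_simp
    have h1' := mul_le_mul_of_nonneg_right h1 hnv.le
    have h2' := mul_le_mul_of_nonneg_right h2 hnv.le
    rw [e] at h1'
    rw [neg_mul, e] at h2'
    rw [Real.norm_eq_abs, abs_le]
    constructor <;> linarith

lemma cone_convex : Convex ℝ K := fun x hx y hy s t hs ht _ =>
  hK.2.2.2 _ (hK.2.2.1 s hs x hx) _ (hK.2.2.1 t ht y hy)

lemma sep {ε : ℝ} (hε : 0 < ε) {u v : X}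
    (h : ∀ φ ∈ posQ X K, φ (u - v) ≤ ε) : (v + ε • b) - u ∈ K := by
  by_contra hw
  obtain ⟨f, s, hfK, hfw⟩ := geometric_hahn_banach_closed_point (cone_convex hK hb) hK.1 hw
  have hs : 0 < s := by simpa using hfK 0 hK.2.1
  have hfK' : ∀ a ∈ K, f a ≤ 0 := by
    intro a ha
    by_contra hpos
    push_neg at hpos
    have h2 := hfK _ (hK.2.2.1 (s / f a + 1) (by positivity) a ha)
    rw [map_smul, smul_eq_mul] at h2
    have e : s / f a * f a = s := div_mul_cancel₀ s hpos.ne'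
    nlinarith
  have hfne : f ≠ 0 := by
    intro h0
    rw [h0] at hfw
    simp at hfw
    linarith
  have hnf : 0 < ‖f‖ := norm_pos_iff.2 hfne
  set φ : StrongDual ℝ X := -(‖f‖⁻¹ • f) with hφdef
  have hφQ : φ ∈ posQ X K := by
    constructor
    · rw [hφdef, norm_neg, norm_smul]
      simp [abs_of_nonneg (inv_nonneg.2 hnf.le)]
      rw [inv_mul_cancel₀ hnf.ne']
    · intro a ha
      have := hfK' a ha
      simp only [hφdef, ContinuousLinearMap.neg_apply, ContinuousLinearMap.smul_apply,
        smul_eq_mul]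
      nlinarith [inv_pos.2 hnf]
  have hφnorm : (1:ℝ) ≤ φ b := by
    have := norm_le_apply_b hK hb hφQ
    have hn1 : ‖φ‖ = 1 := by
      rw [hφdef, norm_neg, norm_smul]
      simp [abs_of_nonneg (inv_nonneg.2 hnf.le)]
      rw [inv_mul_cancel₀ hnf.ne']
    linarith [hn1 ▸ this]
  have hφw : φ ((v + ε • b) - u) < 0 := by
    have : 0 < f ((v + ε • b) - u) := lt_trans hs hfw
    simp only [hφdef, ContinuousLinearMap.neg_apply, ContinuousLinearMap.smul_apply, smul_eq_mul]
    nlinarith [inv_pos.2 hnf]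
  have huv := h φ hφQ
  have hexp : φ (u - v) = φ u - φ v := by rw [map_sub]
  have hexp2 : φ ((v + ε • b) - u) = φ v + ε * φ b - φ u := by
    rw [map_sub, map_add, map_smul, smul_eq_mul]
  rw [hexp2] at hφw
  rw [hexp] at huv
  nlinarith


lemma ddist_incl_zero_of_mem {u v : X} (huv : v - u ∈ K) :
    ddist K (NormedSpace.inclusionInDoubleDual ℝ X u) (NormedSpace.inclusionInDoubleDual ℝ X v) = 0 := by
  apply ddist_eq_zero
  intro φ hφ
  have h1 : 0 ≤ φ (v - u) := hφ.2 _ huv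
  rw [map_sub] at h1
  simp only [ContinuousLinearMap.sub_apply, NormedSpace.dual_def]
  linarith

omit hK in
lemma pert_le {u : X} {t : ℝ} (ht : 0 ≤ t) :
    ddist K (NormedSpace.inclusionInDoubleDual ℝ X u)
      (NormedSpace.inclusionInDoubleDual ℝ X (u - t • b)) ≤ ENNReal.ofReal (t * ‖b‖) := by
  apply ddist_le_ofReal
  intro φ hφ
  simp only [map_sub, map_smul, ContinuousLinearMap.sub_apply, ContinuousLinearMap.smul_apply,
    NormedSpace.dual_def, smul_eq_mul]
  have h1 : φ b ≤ ‖b‖ := by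
    have := φ.le_opNorm b
    have h2 : |φ b| ≤ ‖φ‖ * ‖b‖ := by simpa [Real.norm_eq_abs] using this
    nlinarith [abs_nonneg (φ b), le_abs_self (φ b), norm_nonneg b, hφ.1, norm_nonneg φ]
  nlinarith [le_abs_self (φ b)]

omit hK hb in
lemma smul_mem_posQ {φ : StrongDual ℝ X} (hφ : φ ∈ posQ X K) (hφ0 : φ ≠ 0) :
    (‖φ‖⁻¹ • φ) ∈ posQ X K := by
  have hnφ : 0 < ‖φ‖ := norm_pos_iff.2 hφ0
  constructor
  · rw [norm_smul]
    simp [abs_of_nonneg (inv_nonneg.2 hnφ.le)]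
    rw [inv_mul_cancel₀ hnφ.ne']
  · intro v hv
    have := hφ.2 v hv
    simp only [ContinuousLinearMap.smul_apply, smul_eq_mul]
    positivity

lemma below_limit {a x : Bidual X} {t : ℝ} (ht : 0 ≤ t)
    (h : ddist K a x ≤ ENNReal.ofReal t) :
    ddist K (a - (2 * t) • (NormedSpace.inclusionInDoubleDual ℝ X b)) x = 0 := by
  apply ddist_eq_zero
  intro φ hφ
  have hexp : (a - (2 * t) • (NormedSpace.inclusionInDoubleDual ℝ X b) - x) φ
      = (a - x) φ - 2 * t * φ b := by
    simp only [ContinuousLinearMap.sub_apply, ContinuousLinearMap.smul_apply, smul_eq_mul,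
      NormedSpace.dual_def]
    ring
  rw [hexp]
  have hb0 : 0 ≤ φ b := hφ.2 b (bK hK hb)
  rcases eq_or_ne φ 0 with rfl | hφ0
  · simp
  · have hnφ : 0 < ‖φ‖ := norm_pos_iff.2 hφ0
    have hψ := smul_mem_posQ (K := K) hφ hφ0
    have h1 : (a - x) (‖φ‖⁻¹ • φ) ≤ t := apply_le_of_ddist_le ht h _ hψ
    rw [map_smul, smul_eq_mul] at h1
    have h2 : (a - x) φ ≤ ‖φ‖ * t := by
      have := mul_le_mul_of_nonneg_left h1 hnφ.le
      rw [← mul_assoc, mul_inv_cancel₀ hnφ.ne', one_mul] at this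
      linarith
    have h3 : ‖φ‖ ≤ φ b := norm_le_apply_b hK hb hφ
    nlinarith

end helpers



/-- if the unit ball `X^1` is `≤`-bounded then `X^C = X^m`: `x ∈ X**` is
the `→^◦_◦`-limit of a `d`-Cauchy net with terms in `X` iff it is the `→^◦_◦`-limit of
a `≤`-increasing net with terms in `X`. -/
theorem stmt11 (X : Type) [NormedAddCommGroup X] [NormedSpace ℝ X] [CompleteSpace X]
    (K : Set X) (hK : IsGoodCone X K)
    (hbd : ∃ b : X, ∀ x : X, ‖x‖ ≤ 1 → b - x ∈ K)
    (x : Bidual X) :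
    (∃ (ι : Type) (r : ι → ι → Prop) (y : ι → X),
      Nonempty ι ∧ TransRel r ∧ DirRel r ∧
      DCauchyN r (ddist K) (fun i => NormedSpace.inclusionInDoubleDual ℝ X (y i)) ∧
      BiConvOn r (ddist K) Set.univ
        (fun i => NormedSpace.inclusionInDoubleDual ℝ X (y i)) x) ↔
    (∃ (ι : Type) (r : ι → ι → Prop) (y : ι → X),
      Nonempty ι ∧ TransRel r ∧ DirRel r ∧
      (∀ γ δ, r γ δ → y δ - y γ ∈ K) ∧
      BiConvOn r (ddist K) Set.univ
        (fun i => NormedSpace.inclusionInDoubleDual ℝ X (y i)) x) := by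
  obtain ⟨b, hb⟩ := hbd
  constructor
  · rintro ⟨ι, r, y, ⟨i0⟩, htr, hdir, hC, hconv⟩
    set e : ℕ → ℝ := fun n => (1/2 : ℝ)^n with he_def
    have he : ∀ n, 0 < e n := fun n => by positivity
    have he_anti : ∀ m n, m ≤ n → e n ≤ e m := fun m n h =>
      pow_le_pow_of_le_one (by norm_num) (by norm_num) h
    have he_half : ∀ n : ℕ, e (n+1) = e n / 2 := fun n => by
      simp only [he_def, pow_succ]; ring
    set Y : ι → Bidual X := fun i => NormedSpace.inclusionInDoubleDual ℝ X (y i) with hY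
    have exists_good : ∀ (α : ι) (n : ℕ),
        ∃ γ, r α γ ∧ ∀ δ, r γ δ → ddist K (Y γ) (Y δ) ≤ ENNReal.ofReal (e n) := by
      intro α n
      obtain ⟨γ₀, h₀⟩ := hC (ENNReal.ofReal (e n)) (ENNReal.ofReal_pos.2 (he n))
      obtain ⟨γ, hγ1, hγ2⟩ := hdir α γ₀
      exact ⟨γ, hγ1, fun δ hδ => (h₀ γ δ hγ2 hδ).le⟩
    set ι' := {p : ι × ℕ // ∀ δ, r p.1 δ → ddist K (Y p.1) (Y δ) ≤ ENNReal.ofReal (e p.2)}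
      with hι'
    set r' : ι' → ι' → Prop := fun p q => r p.1.1 q.1.1 ∧ p.1.2 < q.1.2 with hr'
    set z : ι' → X := fun p => y p.1.1 - (2 * e p.1.2) • b with hz
    have hne : Nonempty ι' := by
      obtain ⟨γ, _, hc⟩ := exists_good i0 0
      exact ⟨⟨(γ, 0), hc⟩⟩
    have htr' : TransRel r' := fun p q w hpq hqw =>
      ⟨htr _ _ _ hpq.1 hqw.1, hpq.2.trans hqw.2⟩
    have hdir' : DirRel r' := by
      intro p q
      obtain ⟨γ₁, h₁, h₂⟩ := hdir p.1.1 q.1.1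
      obtain ⟨γ, hγ, hc⟩ := exists_good γ₁ (max p.1.2 q.1.2 + 1)
      exact ⟨⟨(γ, max p.1.2 q.1.2 + 1), hc⟩,
        ⟨htr _ _ _ h₁ hγ, Nat.lt_succ_of_le (le_max_left _ _)⟩,
        ⟨htr _ _ _ h₂ hγ, Nat.lt_succ_of_le (le_max_right _ _)⟩⟩
    have hmono' : ∀ p q, r' p q → z q - z p ∈ K := by
      intro p q hpq
      have hd := p.2 _ hpq.1
      have hpw : ∀ φ ∈ posQ X K, φ (y p.1.1 - y q.1.1) ≤ e p.1.2 := by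
        intro φ hφ
        have h1 := apply_le_of_ddist_le (he _).le hd φ hφ
        simpa [hY, ContinuousLinearMap.sub_apply, NormedSpace.dual_def, map_sub] using h1
      have hw1 : (y q.1.1 + e p.1.2 • b) - y p.1.1 ∈ K := sep hK hb (he _) hpw
      have hcoef : 0 ≤ e p.1.2 - 2 * e q.1.2 := by
        have h1 := he_anti (p.1.2 + 1) q.1.2 hpq.2
        have h2 := he_half p.1.2
        linarith
      have heq : z q - z p
          = ((y q.1.1 + e p.1.2 • b) - y p.1.1) + (e p.1.2 - 2 * e q.1.2) • b := by
        simp only [hz]; module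
      rw [heq]
      exact hK.2.2.2 _ hw1 _ (hK.2.2.1 _ hcoef b (bK hK hb))
    have hzx : ∀ p : ι',
        ddist K (NormedSpace.inclusionInDoubleDual ℝ X (z p)) x = 0 := by
      rintro ⟨⟨γ, n⟩, hcn⟩
      have hYx : ddist K (Y γ) x ≤ ENNReal.ofReal (e n) := by
        have hlow := hconv.2 (Y γ) (Set.mem_univ _)
        refine hlow.trans ?_
        rw [liminfN]
        refine iSup_le fun α => ?_
        obtain ⟨δ, hδ1, hδ2⟩ := hdir α γ
        exact iInf_le_of_le δ (iInf_le_of_le hδ1 (hcn δ hδ2))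
      have h0 := below_limit hK hb (he n).le hYx
      have heq : NormedSpace.inclusionInDoubleDual ℝ X (z ⟨(γ, n), hcn⟩)
          = Y γ - (2 * e n) • (NormedSpace.inclusionInDoubleDual ℝ X b) := by
        simp [hz, hY, map_sub, map_smul]
      rw [heq]
      exact h0
    refine ⟨ι', r', z, hne, htr', hdir', hmono', ?_, ?_⟩
    · -- upper convergence
      intro c _
      have hup := hconv.1 c (Set.mem_univ c)
      have key : ∀ n : ℕ,
          liminfN r (fun γ => ddist K (Y γ) c)
            ≤ (liminfN r' fun p => ddist K (NormedSpace.inclusionInDoubleDual ℝ X (z p)) c)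
              + ENNReal.ofReal (e n * ‖b‖) := by
        intro n
        rw [liminfN, liminfN]
        refine iSup_le fun α => ?_
        obtain ⟨γ, hγ, hcn⟩ := exists_good α n
        set p : ι' := ⟨(γ, n), hcn⟩ with hp
        have step : (⨅ δ, ⨅ _ : r α δ, ddist K (Y δ) c)
            ≤ (⨅ q, ⨅ _ : r' p q,
                ddist K (NormedSpace.inclusionInDoubleDual ℝ X (z q)) c)
              + ENNReal.ofReal (e n * ‖b‖) := by
          rw [ENNReal.iInf_add]
          refine le_iInf fun q => ?_
          rw [ENNReal.iInf_add]
          refine le_iInf fun hq => ?_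
          have hrαq : r α q.1.1 := htr _ _ _ hγ hq.1
          have hpert : ddist K (Y q.1.1) (NormedSpace.inclusionInDoubleDual ℝ X (z q))
              ≤ ENNReal.ofReal (e n * ‖b‖) := by
            have h1 : ddist K (Y q.1.1) (NormedSpace.inclusionInDoubleDual ℝ X (z q))
                ≤ ENNReal.ofReal ((2 * e q.1.2) * ‖b‖) := pert_le hb (by positivity)
            refine h1.trans (ENNReal.ofReal_le_ofReal ?_)
            have h2 := he_anti (n + 1) q.1.2 hq.2
            have h3 := he_half n
            nlinarith [norm_nonneg b, he q.1.2]
          calc (⨅ δ, ⨅ _ : r α δ, ddist K (Y δ) c)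
              ≤ ddist K (Y q.1.1) c := iInf_le_of_le q.1.1 (iInf_le _ hrαq)
            _ ≤ ddist K (Y q.1.1) (NormedSpace.inclusionInDoubleDual ℝ X (z q))
                + ddist K (NormedSpace.inclusionInDoubleDual ℝ X (z q)) c :=
                ddist_triangle _ _ _
            _ ≤ ENNReal.ofReal (e n * ‖b‖)
                + ddist K (NormedSpace.inclusionInDoubleDual ℝ X (z q)) c :=
                add_le_add_left hpert _
            _ = ddist K (NormedSpace.inclusionInDoubleDual ℝ X (z q)) c
                + ENNReal.ofReal (e n * ‖b‖) := add_comm _ _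
        exact step.trans (add_le_add_left
          (le_iSup (fun p : ι' => ⨅ q, ⨅ _ : r' p q,
            ddist K (NormedSpace.inclusionInDoubleDual ℝ X (z q)) c) p) _)
      refine hup.trans (ENNReal.le_of_forall_pos_le_add fun η hη _ => ?_)
      have hηR : (0:ℝ) < (η:ℝ) := by exact_mod_cast hη
      obtain ⟨n, hn⟩ := exists_pow_lt_of_lt_one
        (show (0:ℝ) < (η:ℝ) / (‖b‖ + 1) by positivity) (by norm_num : (1:ℝ)/2 < 1)
      have h2 : e n * ‖b‖ ≤ (η:ℝ) := by
        have h3 : e n < (η:ℝ) / (‖b‖ + 1) := hn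
        rw [lt_div_iff₀ (by positivity : (0:ℝ) < ‖b‖ + 1)] at h3
        nlinarith [he n, norm_nonneg b]
      refine (key n).trans (add_le_add_right ?_ _)
      rw [← ENNReal.ofReal_coe_nnreal]
      exact ENNReal.ofReal_le_ofReal h2
    · -- lower convergence
      intro c _
      rw [liminfN]
      obtain ⟨p₀⟩ := hne
      refine le_iSup_of_le p₀ (le_iInf fun q => le_iInf fun _ => ?_)
      calc ddist K c x
          ≤ ddist K c (NormedSpace.inclusionInDoubleDual ℝ X (z q))
            + ddist K (NormedSpace.inclusionInDoubleDual ℝ X (z q)) x :=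
            ddist_triangle _ _ _
        _ = ddist K c (NormedSpace.inclusionInDoubleDual ℝ X (z q)) := by
            rw [hzx q, add_zero]
  · rintro ⟨ι, r, y, hne, htr, hdir, hmono, hconv⟩
    refine ⟨ι, r, y, hne, htr, hdir, ?_, hconv⟩
    intro ε hε
    obtain ⟨i0⟩ := hne
    refine ⟨i0, fun γ δ _ hγδ => ?_⟩
    have h0 : ddist K (NormedSpace.inclusionInDoubleDual ℝ X (y γ))
        (NormedSpace.inclusionInDoubleDual ℝ X (y δ)) = 0 :=
      ddist_incl_zero_of_mem hK hb (hmono γ δ hγδ)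
    show ddist K (NormedSpace.inclusionInDoubleDual ℝ X (y γ))
        (NormedSpace.inclusionInDoubleDual ℝ X (y δ)) < ε
    rw [h0]
    exact hε
end

section
/- Let X be a preordered Banach space and Q a compact Hausdorff space. For every f ∈ C(Q, X) (norm-continuous functions Q → X), the supremum half-seminorm coincides with the canonical half-seminorm: sup_{p∈Q} ‖f(p)‖_≤ = inf{ sup_{p∈Q} ‖g(p)‖ : g ∈ C(Q, X) and f(p) ≤ g(p) for all p ∈ Q }. -/
open TopologicalSpace ENNReal

/-- for `f ∈ C(Q, X)` the supremum half-seminorm coincides with the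
canonical half-seminorm: `sup_p ‖f(p)‖_≤ = inf { sup_p ‖g(p)‖ : g ∈ C(Q,X), f ≤ g }`. -/
theorem stmt14 (X : Type) [NormedAddCommGroup X] [NormedSpace ℝ X] [CompleteSpace X]
    (K : Set X) (hK : IsGoodCone X K)
    (Q : Type) [TopologicalSpace Q] [CompactSpace Q] [T2Space Q]
    (f : C(Q, X)) :
    (⨆ p : Q, ⨅ b ∈ {b : X | b - f p ∈ K}, (‖b‖₊ : ℝ≥0∞)) =
      ⨅ g ∈ {g : C(Q, X) | ∀ p, g p - f p ∈ K}, ⨆ p : Q, (‖g p‖₊ : ℝ≥0∞) := by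
  obtain ⟨hKcl, hK0, hKsmul, hKadd⟩ := hK
  set L : ℝ≥0∞ := ⨆ p : Q, ⨅ b ∈ {b : X | b - f p ∈ K}, (‖b‖₊ : ℝ≥0∞) with hL
  apply le_antisymm
  · refine le_iInf₂ fun g hg => iSup_mono fun p => ?_
    exact iInf₂_le (g p) (show g p ∈ {b : X | b - f p ∈ K} from hg p)
  · refine ENNReal.le_of_forall_pos_le_add fun ε hε hfin => ?_
    set S : ℝ := L.toReal with hS
    have hS0 : 0 ≤ S := ENNReal.toReal_nonneg
    set εr : ℝ := (ε : ℝ) / 2 with hεr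
    have hεr0 : 0 < εr := by positivity
    -- choose near-optimal upper bounds
    have hb : ∀ p : Q, ∃ b : X, b - f p ∈ K ∧ ‖b‖ ≤ S + εr := by
      intro p
      have h1 : (⨅ b ∈ {b : X | b - f p ∈ K}, (‖b‖₊ : ℝ≥0∞)) < L + ENNReal.ofReal εr := by
        refine lt_of_le_of_lt (le_iSup (fun p : Q => ⨅ b ∈ {b : X | b - f p ∈ K},
          (‖b‖₊ : ℝ≥0∞)) p) ?_
        exact ENNReal.lt_add_right hfin.ne (by simpa using (ENNReal.ofReal_pos.2 hεr0).ne')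
      rw [iInf_lt_iff] at h1
      obtain ⟨b, hb1⟩ := h1
      rw [iInf_lt_iff] at hb1
      obtain ⟨hbK, hb2⟩ := hb1
      refine ⟨b, hbK, ?_⟩
      have := ENNReal.toReal_le_toReal (by simp) (by
        simp [ENNReal.add_ne_top, hfin.ne] : L + ENNReal.ofReal εr ≠ ∞) |>.2 hb2.le
      rwa [ENNReal.toReal_add hfin.ne ENNReal.ofReal_ne_top, ENNReal.toReal_ofReal hεr0.le,
        ENNReal.coe_toReal, coe_nnnorm] at this
    choose b hbK hbn using hb
    -- an open cover
    set U : Q → Set Q := fun p => {q | ‖f q - f p‖ < εr} with hU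
    have hUopen : ∀ p, IsOpen (U p) :=
      fun p => isOpen_lt (by continuity) continuous_const
    have hUcov : (Set.univ : Set Q) ⊆ ⋃ p, U p := fun q _ =>
      Set.mem_iUnion.2 ⟨q, by simp [hU, hεr0]⟩
    obtain ⟨t, ht⟩ := isCompact_univ.elim_finite_subcover U hUopen hUcov
    -- partition of unity
    obtain ⟨ρ, hρ⟩ := PartitionOfUnity.exists_isSubordinate (ι := {i : Q // i ∈ t})
      isClosed_univ (fun i => U i.1) (fun i => hUopen i.1)
      (by
        intro q hq
        obtain ⟨i, hi⟩ := Set.mem_iUnion₂.1 (ht hq)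
        exact Set.mem_iUnion.2 ⟨⟨i, hi.1⟩, hi.2⟩)
    have hsum1 : ∀ q : Q, ∑ i : {i : Q // i ∈ t}, ρ i q = 1 := by
      intro q
      have := ρ.sum_eq_one (Set.mem_univ q)
      rwa [finsum_eq_sum_of_fintype] at this
    set g : C(Q, X) := ⟨fun q => ∑ i : {i : Q // i ∈ t}, ρ i q • (b i.1 + (f q - f i.1)), by
      refine continuous_finset_sum _ fun i _ => ?_
      exact ((ρ i).continuous).smul (continuous_const.add ((f.continuous).sub
        continuous_const))⟩ with hg
    have hgval : ∀ q : Q, g q = ∑ i : {i : Q // i ∈ t}, ρ i q • (b i.1 + (f q - f i.1)) :=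
      fun q => rfl
    have hgf : ∀ q : Q, g q - f q = ∑ i : {i : Q // i ∈ t}, ρ i q • (b i.1 - f i.1) := by
      intro q
      have h1 : (∑ i : {i : Q // i ∈ t}, ρ i q) • f q = f q := by rw [hsum1 q, one_smul]
      calc g q - f q
          = ∑ i : {i : Q // i ∈ t}, ρ i q • (b i.1 + (f q - f i.1)) -
            (∑ i : {i : Q // i ∈ t}, ρ i q) • f q := by rw [hgval, h1]
        _ = ∑ i : {i : Q // i ∈ t},
            (ρ i q • (b i.1 + (f q - f i.1)) - ρ i q • f q) := by
              rw [Finset.sum_smul, ← Finset.sum_sub_distrib]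
        _ = ∑ i : {i : Q // i ∈ t}, ρ i q • (b i.1 - f i.1) := by
              refine Finset.sum_congr rfl fun i _ => ?_
              rw [← smul_sub]
              congr 1
              abel
    have hgK : ∀ q : Q, g q - f q ∈ K := by
      intro q
      rw [hgf q]
      refine Finset.sum_induction _ (· ∈ K) (fun a b ha hb => hKadd a ha b hb) hK0
        fun i _ => hKsmul _ (ρ.nonneg i q) _ (hbK i.1)
    have hgn : ∀ q : Q, ‖g q‖ ≤ S + (ε : ℝ) := by
      intro q
      rw [hgval]
      calc ‖∑ i : {i : Q // i ∈ t}, ρ i q • (b i.1 + (f q - f i.1))‖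
          ≤ ∑ i : {i : Q // i ∈ t}, ‖ρ i q • (b i.1 + (f q - f i.1))‖ :=
            norm_sum_le _ _
        _ ≤ ∑ i : {i : Q // i ∈ t}, ρ i q * (S + (ε : ℝ)) := by
            refine Finset.sum_le_sum fun i _ => ?_
            rw [norm_smul, Real.norm_of_nonneg (ρ.nonneg i q)]
            rcases eq_or_lt_of_le (ρ.nonneg i q) with h0 | h0
            · rw [← h0]; simp
            · have hqs : q ∈ U i.1 := hρ i (subset_closure (by
                  simpa [Function.support] using h0.ne'))
              have : ‖b i.1 + (f q - f i.1)‖ ≤ S + (ε : ℝ) := by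
                calc ‖b i.1 + (f q - f i.1)‖ ≤ ‖b i.1‖ + ‖f q - f i.1‖ := norm_add_le _ _
                  _ ≤ (S + εr) + εr := add_le_add (hbn i.1) hqs.le
                  _ = S + (ε : ℝ) := by rw [hεr]; ring
              exact mul_le_mul_of_nonneg_left this (ρ.nonneg i q)
        _ = (∑ i : {i : Q // i ∈ t}, ρ i q) * (S + (ε : ℝ)) := by rw [Finset.sum_mul]
        _ = S + (ε : ℝ) := by rw [hsum1 q, one_mul]
    refine le_trans (iInf₂_le g hgK) ?_
    refine iSup_le fun p => ?_
    have : (‖g p‖₊ : ℝ≥0∞) ≤ ENNReal.ofReal (S + (ε : ℝ)) := by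
      rw [← ENNReal.ofReal_coe_nnreal, coe_nnnorm]
      exact ENNReal.ofReal_le_ofReal (hgn p)
    refine le_trans this ?_
    rw [ENNReal.ofReal_add hS0 ε.coe_nonneg, ENNReal.ofReal_toReal hfin.ne,
      ENNReal.ofReal_coe_nnreal]
end

section
/- Let X be a preordered Banach space and Q a compact Hausdorff space. Then C^1 ⊆ S^{1F}: every f ∈ C(Q,X) with ‖f(p)‖ ≤ 1 for all p is sup-d-finite in S^1 = S ∩ B^1, i.e. sup-d(f, g_λ) → sup-d(f, g) whenever (g_λ) is a sup-d-Cauchy net with terms in S^1 and g_λ →^◦_◦ g with g ∈ S^1 (holes tested against all elements of B). -/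
open TopologicalSpace ENNReal

section Stmt17Helpers

open Filter
open scoped Classical

/-- Ultrafilter limit of a real net (0 if no limit exists). -/
noncomputable def ulim {ι : Type} (U : Ultrafilter ι) (u : ι → ℝ) : ℝ :=
  if h : ∃ c, Filter.Tendsto u ↑U (nhds c) then h.choose else 0

theorem ulim_spec {ι : Type} (U : Ultrafilter ι) (u : ι → ℝ) (M : ℝ)
    (hM : ∀ i, |u i| ≤ M) : Filter.Tendsto u ↑U (nhds (ulim U u)) := by
  have hle : ↑(U.map u) ≤ Filter.principal (Set.Icc (-M) M) := by
    rw [le_principal_iff]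
    have : ∀ i, u i ∈ Set.Icc (-M) M := fun i => abs_le.mp (hM i)
    exact Filter.mem_map.mpr (Filter.Eventually.of_forall this)
  obtain ⟨c, _, hc⟩ := (isCompact_Icc (a := -M) (b := M)).ultrafilter_le_nhds (U.map u) hle
  have hex : ∃ c, Filter.Tendsto u ↑U (nhds c) :=
    ⟨c, by simpa [Filter.Tendsto, Ultrafilter.coe_map] using hc⟩
  rw [ulim, dif_pos hex]
  exact hex.choose_spec

theorem ulim_eq {ι : Type} (U : Ultrafilter ι) (u : ι → ℝ) (c : ℝ)
    (h : Filter.Tendsto u ↑U (nhds c)) : ulim U u = c := by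
  have hex : ∃ c, Filter.Tendsto u ↑U (nhds c) := ⟨c, h⟩
  rw [ulim, dif_pos hex]
  exact tendsto_nhds_unique hex.choose_spec h

theorem ennreal_le_of_forall_eps {x y : ℝ≥0∞}
    (h : ∀ ε : ℝ, 0 < ε → x ≤ y + ENNReal.ofReal ε) : x ≤ y := by
  refine ENNReal.le_of_forall_pos_le_add fun ε hε _ => ?_
  simpa [ENNReal.ofReal_coe_nnreal] using h ε (by exact_mod_cast hε)

theorem ennreal_eq_zero_of_forall_eps {x : ℝ≥0∞}
    (h : ∀ ε : ℝ, 0 < ε → x ≤ ENNReal.ofReal ε) : x = 0 :=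
  le_antisymm (ennreal_le_of_forall_eps (fun ε hε => by simpa using h ε hε)) zero_le

theorem liminfN_le_limsupN' {ι : Type} {r : ι → ι → Prop} (hdir : DirRel r)
    (a : ι → ℝ≥0∞) : liminfN r a ≤ limsupN r a := by
  unfold liminfN limsupN
  refine iSup_le fun γ => le_iInf fun γ' => ?_
  obtain ⟨δ, h1, h2⟩ := hdir γ γ'
  calc (⨅ δ', ⨅ _ : r γ δ', a δ') ≤ a δ := iInf₂_le δ h1
  _ ≤ ⨆ δ', ⨆ _ : r γ' δ', a δ' := le_iSup₂ (f := fun δ' (_ : r γ' δ') => a δ') δ h2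

theorem supD_le_add {Q X : Type} (d : X → X → ℝ≥0∞)
    (hd : ∀ x y z, d x z ≤ d x y + d y z) (f g h : Q → X) :
    supD d f h ≤ supD d f g + supD d g h := by
  unfold supD
  refine iSup_le fun p => le_trans (hd (f p) (g p) (h p)) ?_
  exact add_le_add (le_iSup (fun p => d (f p) (g p)) p) (le_iSup (fun p => d (g p) (h p)) p)

variable {X : Type} [NormedAddCommGroup X] [NormedSpace ℝ X]

theorem ddist_triangle' (K : Set X) (x y z : Bidual X) :
    ddist K x z ≤ ddist K x y + ddist K y z := by
  unfold ddist
  refine iSup₂_le fun φ hφ => ?_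
  have hxz : (x - z) φ = (x - y) φ + (y - z) φ := by
    simp [ContinuousLinearMap.sub_apply]
  rw [hxz]
  refine le_trans ENNReal.ofReal_add_le (add_le_add ?_ ?_)
  · exact le_iSup₂ (f := fun φ (_ : φ ∈ posQ X K) => ENNReal.ofReal ((x - y) φ)) φ hφ
  · exact le_iSup₂ (f := fun φ (_ : φ ∈ posQ X K) => ENNReal.ofReal ((y - z) φ)) φ hφ

theorem ddist_le_two (K : Set X) {x y : Bidual X} (hx : ‖x‖ ≤ 1) (hy : ‖y‖ ≤ 1) :
    ddist K x y ≤ ENNReal.ofReal 2 := by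
  unfold ddist
  refine iSup₂_le fun φ hφ => ENNReal.ofReal_le_ofReal ?_
  have h1 : (x - y) φ ≤ ‖(x - y) φ‖ := le_abs_self _
  have h2 : ‖(x - y) φ‖ ≤ ‖x - y‖ * ‖φ‖ := (x - y).le_opNorm φ
  have h3 : ‖x - y‖ ≤ 2 := le_trans (norm_sub_le x y) (by linarith)
  nlinarith [norm_nonneg (x - y), norm_nonneg φ, hφ.1]

theorem eval_le_of_ddist_le (K : Set X) {x y : Bidual X} {ε : ℝ} (hε : 0 < ε)
    (h : ddist K x y ≤ ENNReal.ofReal ε) {φ : StrongDual ℝ X}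
    (hφ : φ ∈ posQ X K) : x φ - y φ ≤ ε := by
  have h1 : ENNReal.ofReal ((x - y) φ) ≤ ENNReal.ofReal ε := by
    refine le_trans ?_ h
    exact le_iSup₂ (f := fun φ (_ : φ ∈ posQ X K) => ENNReal.ofReal ((x - y) φ)) φ hφ
  by_contra hc
  push_neg at hc
  have h2 : ENNReal.ofReal ε < ENNReal.ofReal ((x - y) φ) := by
    refine (ENNReal.ofReal_lt_ofReal_iff_of_nonneg hε.le).mpr ?_
    rw [ContinuousLinearMap.sub_apply]; exact hc
  exact absurd h1 (not_le.mpr h2)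

end Stmt17Helpers

/-- `C^1 ⊆ S^{1F}`: every `f ∈ C(Q,X)` with `‖f p‖ ≤ 1` for all `p` is
`sup-d`-finite in `S^1`: `sup-d(f, g_λ) → sup-d(f, g)` whenever `(g_λ)` is a
`sup-d`-Cauchy net in `S^1` with `g_λ →^◦_◦ g ∈ S^1` (holes tested against `B`). -/
theorem stmt17 (X : Type) [NormedAddCommGroup X] [NormedSpace ℝ X] [CompleteSpace X]
    (K : Set X) (hK : IsGoodCone X K)
    (Q : Type) [TopologicalSpace Q] [CompactSpace Q] [T2Space Q]
    (f : C(Q, X)) (hf1 : ∀ p, ‖f p‖ ≤ 1)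
    (ι : Type) (r : ι → ι → Prop) (g : ι → Q → Bidual X) (l : Q → Bidual X)
    (hne : Nonempty ι) (htr : TransRel r) (hdir : DirRel r)
    (hg : ∀ i, MemS K (g i) ∧ ∀ p, ‖g i p‖ ≤ 1)
    (hC : DCauchyN r (supD (ddist K)) g)
    (hconv : BiConvOn r (supD (ddist K)) (Bset X Q) g l)
    (hl : MemS K l ∧ ∀ p, ‖l p‖ ≤ 1) :
    TendstoN r
      (fun i => supD (ddist K) (fun p => NormedSpace.inclusionInDoubleDual ℝ X (f p)) (g i))
      (supD (ddist K) (fun p => NormedSpace.inclusionInDoubleDual ℝ X (f p)) l) := by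
  classical
  set F : Q → Bidual X := fun p => NormedSpace.inclusionInDoubleDual ℝ X (f p) with hF
  have hFb : ∀ p, ‖F p‖ ≤ 1 := fun p => by
    exact le_trans (NormedSpace.double_dual_bound ℝ X (f p)) (hf1 p)
  have hFmem : F ∈ Bset X Q := ⟨1, hFb⟩
  set a : ι → ℝ≥0∞ := fun i => supD (ddist K) F (g i) with ha
  set L : ℝ≥0∞ := supD (ddist K) F l with hLdef
  have hab : ∀ i, a i ≤ ENNReal.ofReal 2 := fun i =>
    iSup_le fun p => ddist_le_two K (hFb p) ((hg i).2 p)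
  -- the tail ultrafilter
  have hTne : Filter.NeBot (⨅ γ, Filter.principal {δ | r γ δ}) := by
    refine Filter.iInf_neBot_of_directed ?_ ?_
    · intro γ γ'
      obtain ⟨δ, h1, h2⟩ := hdir γ γ'
      refine ⟨δ, ?_, ?_⟩
      · exact Filter.principal_mono.mpr (fun x hx => htr γ δ x h1 hx)
      · exact Filter.principal_mono.mpr (fun x hx => htr γ' δ x h2 hx)
    · intro γ
      obtain ⟨δ, h1, _⟩ := hdir γ γ
      exact Filter.principal_neBot_iff.mpr ⟨δ, h1⟩
  haveI := hTne
  set U₀ : Ultrafilter ι := Ultrafilter.of (⨅ γ, Filter.principal {δ | r γ δ}) with hU₀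
  have htailU : ∀ γ, {δ | r γ δ} ∈ U₀ := fun γ => by
    have h1 : (⨅ γ', Filter.principal {δ | r γ' δ}) ≤ Filter.principal {δ | r γ δ} :=
      iInf_le _ γ
    exact Filter.le_principal_iff.mp (le_trans (Ultrafilter.of_le _) h1)
  -- the candidate forward limit hfn
  have hgb : ∀ i p (φ : StrongDual ℝ X), |g i p φ| ≤ ‖φ‖ := fun i p φ => by
    have h1 : ‖g i p φ‖ ≤ ‖g i p‖ * ‖φ‖ := (g i p).le_opNorm φ
    rw [Real.norm_eq_abs] at h1
    calc |g i p φ| ≤ ‖g i p‖ * ‖φ‖ := h1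
    _ ≤ 1 * ‖φ‖ := mul_le_mul_of_nonneg_right ((hg i).2 p) (norm_nonneg φ)
    _ = ‖φ‖ := one_mul _
  let hlin : Q → (StrongDual ℝ X →ₗ[ℝ] ℝ) := fun p =>
    { toFun := fun φ => ulim U₀ (fun γ => g γ p φ)
      map_add' := fun φ ψ => by
        have h1 := ulim_spec U₀ (fun γ => g γ p φ) ‖φ‖ (fun γ => hgb γ p φ)
        have h2 := ulim_spec U₀ (fun γ => g γ p ψ) ‖ψ‖ (fun γ => hgb γ p ψ)
        refine ulim_eq U₀ _ _ ?_
        have he : (fun γ => g γ p (φ + ψ)) = fun γ => g γ p φ + g γ p ψ := by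
          funext γ; exact map_add (g γ p) φ ψ
        rw [he]; exact h1.add h2
      map_smul' := fun c φ => by
        have h1 := ulim_spec U₀ (fun γ => g γ p φ) ‖φ‖ (fun γ => hgb γ p φ)
        simp only [RingHom.id_apply, smul_eq_mul]
        refine ulim_eq U₀ _ _ ?_
        have he : (fun γ => g γ p (c • φ)) = fun γ => c * g γ p φ := by
          funext γ; rw [map_smul]; simp [smul_eq_mul]
        rw [he]; exact h1.const_mul c }
  have hlinb : ∀ p (φ : StrongDual ℝ X), ‖hlin p φ‖ ≤ 1 * ‖φ‖ := fun p φ => by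
    rw [Real.norm_eq_abs, one_mul]
    have h1 := ulim_spec U₀ (fun γ => g γ p φ) ‖φ‖ (fun γ => hgb γ p φ)
    exact le_of_tendsto h1.abs (Filter.Eventually.of_forall fun γ => hgb γ p φ)
  set hfn : Q → Bidual X := fun p => LinearMap.mkContinuous (hlin p) 1 (hlinb p) with hhfn
  have hhspec : ∀ p φ, Filter.Tendsto (fun γ => g γ p φ) ↑U₀ (nhds (hfn p φ)) := fun p φ => by
    have he : hfn p φ = ulim U₀ (fun γ => g γ p φ) := rfl
    rw [he]; exact ulim_spec U₀ _ ‖φ‖ (fun γ => hgb γ p φ)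
  have hhb : ∀ p, ‖hfn p‖ ≤ 1 := fun p => LinearMap.mkContinuous_norm_le _ zero_le_one _
  have hhmem : hfn ∈ Bset X Q := ⟨1, hhb⟩
  have hzero_mem : (0 : StrongDual ℝ X) ∈ posQ X K := by
    refine ⟨by simp, fun v _ => ?_⟩
    simp
  -- pointwise evaluation form of the Cauchy property
  have hCe : ∀ {ε : ℝ}, 0 < ε → ∃ γ₀, (∀ γ δ, r γ₀ γ → r γ δ →
      supD (ddist K) (g γ) (g δ) < ENNReal.ofReal ε) ∧ (∀ γ δ, r γ₀ γ → r γ δ →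
      ∀ p (φ : StrongDual ℝ X), φ ∈ posQ X K → g γ p φ - g δ p φ ≤ ε) := by
    intro ε hε
    obtain ⟨γ₀, hγ₀⟩ := hC (ENNReal.ofReal ε) (ENNReal.ofReal_pos.mpr hε)
    refine ⟨γ₀, hγ₀, fun γ δ h1 h2 p φ hφ => ?_⟩
    have h3 : ddist K (g γ p) (g δ p) ≤ ENNReal.ofReal ε :=
      le_trans (le_iSup (fun p => ddist K (g γ p) (g δ p)) p) (hγ₀ γ δ h1 h2).le
    exact eval_le_of_ddist_le K hε h3 hφ
  -- the g's converge forward to hfn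
  have hgh : ∀ {ε : ℝ}, 0 < ε → ∃ γ₀, ∀ γ, r γ₀ γ →
      supD (ddist K) (g γ) hfn ≤ ENNReal.ofReal ε := by
    intro ε hε
    have hε2 : 0 < ε / 2 := by linarith
    obtain ⟨γ₀, _, hγ₀⟩ := hCe hε2
    refine ⟨γ₀, fun γ hγ => ?_⟩
    unfold supD ddist
    refine iSup_le fun p => iSup₂_le fun φ hφ => ENNReal.ofReal_le_ofReal ?_
    rw [ContinuousLinearMap.sub_apply]
    have hev : ∀ᶠ δ in ↑U₀, g γ p φ - ε / 2 ≤ g δ p φ := by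
      filter_upwards [htailU γ] with δ hδ
      have := hγ₀ γ δ hγ hδ p φ hφ; linarith
    have := ge_of_tendsto (hhspec p φ) hev
    linarith
  -- d(l, hfn) = 0
  have hlh : supD (ddist K) l hfn = 0 := by
    refine ennreal_eq_zero_of_forall_eps fun ε hε => ?_
    obtain ⟨γ₀, hγ₀⟩ := hgh hε
    refine le_trans (hconv.1 hfn hhmem) ?_
    unfold liminfN
    refine iSup_le fun γ => ?_
    obtain ⟨δ, h1, h2⟩ := hdir γ γ₀
    exact le_trans (iInf₂_le δ h1) (hγ₀ δ h2)
  -- the limsup A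
  set A : ℝ≥0∞ := limsupN r a with hAdef
  have hA2 : A ≤ ENNReal.ofReal 2 := by
    rw [hAdef]; unfold limsupN
    exact le_trans (iInf_le _ hne.some) (iSup_le fun δ => iSup_le fun _ => hab δ)
  have hAne : A ≠ ⊤ := ne_top_of_le_ne_top ENNReal.ofReal_ne_top hA2
  have hA_le_tail : ∀ γ, A ≤ ⨆ δ, ⨆ _ : r γ δ, a δ := fun γ => by
    rw [hAdef]; unfold limsupN; exact iInf_le _ γ
  -- THE CORE: A ≤ supD F hfn
  have hcore : A ≤ supD (ddist K) F hfn := by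
    have key : ∀ ε : ℝ, 0 < ε → A ≤ supD (ddist K) F hfn + ENNReal.ofReal (6 * ε) := by
      intro ε hε
      obtain ⟨γc, hγcC, hγcE⟩ := hCe hε
      have htaila : ∀ γ, r γc γ → A ≤ a γ + ENNReal.ofReal ε := by
        intro γ hγ
        refine le_trans (hA_le_tail γ) (iSup₂_le fun δ hδ => ?_)
        calc a δ ≤ a γ + supD (ddist K) (g γ) (g δ) :=
              supD_le_add (ddist K) (ddist_triangle' K) F (g γ) (g δ)
        _ ≤ a γ + ENNReal.ofReal ε := add_le_add le_rfl (hγcC γ δ hγ hδ).le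
      by_cases hsmall : A ≤ ENNReal.ofReal (6 * ε)
      · exact le_trans hsmall le_add_self
      replace hsmall := not_le.mp hsmall
      set Ar : ℝ := A.toReal with hArdef
      have hArofReal : A = ENNReal.ofReal Ar := (ENNReal.ofReal_toReal hAne).symm
      have hAr6 : 6 * ε ≤ Ar := by
        have h1 := hsmall.le
        rw [hArofReal] at h1
        exact (ENNReal.ofReal_le_ofReal_iff ENNReal.toReal_nonneg).mp h1
      -- witnesses
      set W : Set ι := {γ | ∃ p, ∃ φ : StrongDual ℝ X, φ ∈ posQ X K ∧
        Ar - 2 * ε < (F p) φ - g γ p φ} with hWdef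
      have hWtail : ∀ γ, r γc γ → γ ∈ W := by
        intro γ hγ
        have h1 : ENNReal.ofReal (Ar - 2 * ε) < a γ := by
          by_contra hcon
          push_neg at hcon
          have h2 : A ≤ ENNReal.ofReal (Ar - 2 * ε) + ENNReal.ofReal ε :=
            le_trans (htaila γ hγ) (add_le_add hcon le_rfl)
          rw [← ENNReal.ofReal_add (by linarith) hε.le, hArofReal] at h2
          have h3 := (ENNReal.ofReal_le_ofReal_iff (by linarith)).mp h2
          linarith
        have h1' : ENNReal.ofReal (Ar - 2 * ε) <
            ⨆ p, ⨆ φ, ⨆ _ : φ ∈ posQ X K, ENNReal.ofReal ((F p - g γ p) φ) := by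
          have he : a γ = ⨆ p, ⨆ φ, ⨆ _ : φ ∈ posQ X K,
              ENNReal.ofReal ((F p - g γ p) φ) := rfl
          rwa [he] at h1
        obtain ⟨p, hp⟩ := lt_iSup_iff.mp h1'
        obtain ⟨φ, hφ⟩ := lt_iSup_iff.mp hp
        obtain ⟨hφm, hlt⟩ := lt_iSup_iff.mp hφ
        have h4 := (ENNReal.ofReal_lt_ofReal_iff_of_nonneg (by linarith)).mp hlt
        rw [ContinuousLinearMap.sub_apply] at h4
        exact ⟨p, φ, hφm, h4⟩
      have hWU : W ∈ U₀ := Filter.mem_of_superset (htailU γc) hWtail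
      have hQne : Nonempty Q := by
        obtain ⟨γw, hγw⟩ := Ultrafilter.nonempty_of_mem hWU
        obtain ⟨p, _⟩ := hγw
        exact ⟨p⟩
      let pfun : ι → Q := fun γ => if hγ : γ ∈ W then hγ.choose else Classical.arbitrary Q
      let φfun : ι → StrongDual ℝ X := fun γ =>
        if hγ : γ ∈ W then hγ.choose_spec.choose else 0
      have hφmem : ∀ γ, φfun γ ∈ posQ X K := fun γ => by
        by_cases hγ : γ ∈ W
        · simp only [φfun, dif_pos hγ]; exact hγ.choose_spec.choose_spec.1
        · simp only [φfun, dif_neg hγ]; exact hzero_mem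
      have hwit : ∀ γ, γ ∈ W →
          Ar - 2 * ε < (F (pfun γ)) (φfun γ) - g γ (pfun γ) (φfun γ) := fun γ hγ => by
        simp only [pfun, φfun, dif_pos hγ]
        exact hγ.choose_spec.choose_spec.2
      -- the limit point p*
      obtain ⟨pstar, -, hpstar⟩ := (isCompact_univ (X := Q)).ultrafilter_le_nhds
        (U₀.map pfun) (Filter.le_principal_iff.mpr Filter.univ_mem)
      have hptend : Filter.Tendsto pfun ↑U₀ (nhds pstar) := by
        simpa [Filter.Tendsto, Ultrafilter.coe_map] using hpstar
      -- the limit functional φ*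
      have hφb : ∀ γ v, |φfun γ v| ≤ ‖v‖ := fun γ v => by
        have h1 : ‖φfun γ v‖ ≤ ‖φfun γ‖ * ‖v‖ := (φfun γ).le_opNorm v
        rw [Real.norm_eq_abs] at h1
        calc |φfun γ v| ≤ ‖φfun γ‖ * ‖v‖ := h1
        _ ≤ 1 * ‖v‖ := mul_le_mul_of_nonneg_right (hφmem γ).1 (norm_nonneg v)
        _ = ‖v‖ := one_mul _
      let φlin : X →ₗ[ℝ] ℝ :=
        { toFun := fun v => ulim U₀ (fun γ => φfun γ v)
          map_add' := fun v w => by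
            have h1 := ulim_spec U₀ (fun γ => φfun γ v) ‖v‖ (fun γ => hφb γ v)
            have h2 := ulim_spec U₀ (fun γ => φfun γ w) ‖w‖ (fun γ => hφb γ w)
            refine ulim_eq U₀ _ _ ?_
            have he : (fun γ => φfun γ (v + w)) = fun γ => φfun γ v + φfun γ w := by
              funext γ; exact map_add (φfun γ) v w
            rw [he]; exact h1.add h2
          map_smul' := fun c v => by
            have h1 := ulim_spec U₀ (fun γ => φfun γ v) ‖v‖ (fun γ => hφb γ v)
            simp only [RingHom.id_apply, smul_eq_mul]
            refine ulim_eq U₀ _ _ ?_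
            have he : (fun γ => φfun γ (c • v)) = fun γ => c * φfun γ v := by
              funext γ; rw [map_smul]; simp [smul_eq_mul]
            rw [he]; exact h1.const_mul c }
      have hφlinb : ∀ v, ‖φlin v‖ ≤ 1 * ‖v‖ := fun v => by
        rw [Real.norm_eq_abs, one_mul]
        have h1 := ulim_spec U₀ (fun γ => φfun γ v) ‖v‖ (fun γ => hφb γ v)
        exact le_of_tendsto h1.abs (Filter.Eventually.of_forall fun γ => hφb γ v)
      set φstar : StrongDual ℝ X := LinearMap.mkContinuous φlin 1 hφlinb with hφstardef
      have hφspec : ∀ v, Filter.Tendsto (fun γ => φfun γ v) ↑U₀ (nhds (φstar v)) := fun v => by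
        have he : φstar v = ulim U₀ (fun γ => φfun γ v) := rfl
        rw [he]; exact ulim_spec U₀ _ ‖v‖ (fun γ => hφb γ v)
      have hφstarmem : φstar ∈ posQ X K := by
        constructor
        · exact LinearMap.mkContinuous_norm_le _ zero_le_one _
        · intro v hv
          exact ge_of_tendsto (hφspec v)
            (Filter.Eventually.of_forall fun γ => (hφmem γ).2 v hv)
      -- convergence of evaluated witnesses
      have hfp : Filter.Tendsto (fun γ => φfun γ (f (pfun γ))) ↑U₀
          (nhds (φstar (f pstar))) := by
        have h1 : Filter.Tendsto (fun γ => f (pfun γ) - f pstar) ↑U₀ (nhds 0) := by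
          have h0 := ((map_continuous f).tendsto pstar).comp hptend
          have := h0.sub_const (f pstar)
          simpa using this
        have h2 : Filter.Tendsto (fun γ => φfun γ (f (pfun γ)) - φfun γ (f pstar)) ↑U₀
            (nhds 0) := by
          have hn : Filter.Tendsto (fun γ => ‖f (pfun γ) - f pstar‖) ↑U₀ (nhds 0) := by
            have := h1.norm; simpa using this
          refine squeeze_zero_norm (fun γ => ?_) hn
          have he : φfun γ (f (pfun γ)) - φfun γ (f pstar) =
              φfun γ (f (pfun γ) - f pstar) := (map_sub _ _ _).symm
          rw [Real.norm_eq_abs, he]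
          exact hφb γ _
        have h3 := h2.add (hφspec (f pstar))
        simpa using h3
      -- choose β
      have hβset : ∀ᶠ β in ↑U₀, hfn pstar φstar - ε < g β pstar φstar :=
        (hhspec pstar φstar).eventually_const_lt (by linarith)
      obtain ⟨β, hβ1, hβ2⟩ : ∃ β, r γc β ∧ hfn pstar φstar - ε < g β pstar φstar := by
        have hint := Filter.inter_mem (htailU γc) hβset
        obtain ⟨β, hβ⟩ := Ultrafilter.nonempty_of_mem hint
        exact ⟨β, hβ.1, hβ.2⟩
      obtain ⟨hgβB, hlscβ, hcontβ⟩ := (hg β).1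
      -- EV1 : upper-ball continuity of g β at pstar
      have hO : IsOpen {p : Q | ddist K (g β pstar) (g β p) < ENNReal.ofReal ε} := by
        have hbasic : @IsOpen {x : Bidual X // lscS K x} (TopologicalSpace.generateFrom
            {s | ∃ c : {x : Bidual X // lscS K x}, ∃ ε' : ℝ≥0∞, 0 < ε' ∧
              s = {y : {x : Bidual X // lscS K x} | ddist K c.1 y.1 < ε'}})
            {y : {x : Bidual X // lscS K x} | ddist K (g β pstar) y.1 < ENNReal.ofReal ε} :=
          TopologicalSpace.isOpen_generateFrom_of_mem
            ⟨⟨g β pstar, hlscβ pstar⟩, ENNReal.ofReal ε, ENNReal.ofReal_pos.mpr hε, rfl⟩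
        exact continuous_def.mp hcontβ _ hbasic
      have hpstarO : pstar ∈ {p : Q | ddist K (g β pstar) (g β p) < ENNReal.ofReal ε} := by
        have hdd : ddist K (g β pstar) (g β pstar) = 0 := by
          refine le_antisymm ?_ zero_le
          unfold ddist
          refine iSup₂_le fun φ hφ => ?_
          simp
        rw [Set.mem_setOf_eq, hdd]
        exact ENNReal.ofReal_pos.mpr hε
      have hEV1 : ∀ᶠ γ in ↑U₀, ddist K (g β pstar) (g β (pfun γ)) < ENNReal.ofReal ε :=
        hptend.eventually (hO.eventually_mem hpstarO)
      -- EV2 : lower semicontinuity of g β pstar at φstar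
      have hΦtend : Filter.Tendsto (fun γ => (⟨φfun γ, hφmem γ⟩ : posQ X K)) ↑U₀
          (@nhds _ (qTop X K) ⟨φstar, hφstarmem⟩) := by
        have hn : @nhds _ (qTop X K) (⟨φstar, hφstarmem⟩ : posQ X K) =
            Filter.comap (fun ψ : posQ X K => fun v : X => ψ.1 v)
              (nhds (fun v : X => φstar v)) := nhds_induced _ _
        rw [hn, Filter.tendsto_comap_iff]
        rw [tendsto_pi_nhds]
        intro v
        exact hφspec v
      have hEV2 : ∀ᶠ γ in ↑U₀, g β pstar φstar - ε < g β pstar (φfun γ) := by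
        have hls : lscS K (g β pstar) := hlscβ pstar
        have h1 := hls ⟨φstar, hφstarmem⟩ (g β pstar φstar - ε) (by linarith)
        exact hΦtend.eventually h1
      -- combine
      have hEV : ∀ᶠ γ in ↑U₀, Ar - 5 * ε + g β pstar φstar ≤ φfun γ (f (pfun γ)) := by
        filter_upwards [(hWU : W ∈ (↑U₀ : Filter ι)), htailU β, hEV1, hEV2]
          with γ hγW hγβ hγ1 hγ2
        have h1 := hwit γ hγW
        have h2 : g β (pfun γ) (φfun γ) - g γ (pfun γ) (φfun γ) ≤ ε :=
          hγcE β γ hβ1 hγβ (pfun γ) (φfun γ) (hφmem γ)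
        have h3 : g β pstar (φfun γ) - g β (pfun γ) (φfun γ) ≤ ε :=
          eval_le_of_ddist_le K hε hγ1.le (hφmem γ)
        have h5 : (F (pfun γ)) (φfun γ) = φfun γ (f (pfun γ)) :=
          NormedSpace.dual_def ℝ X _ _
        linarith
      have h6 : Ar - 5 * ε + g β pstar φstar ≤ φstar (f pstar) := ge_of_tendsto hfp hEV
      have h8 : Ar - 6 * ε ≤ φstar (f pstar) - hfn pstar φstar := by linarith
      have h9 : ENNReal.ofReal (Ar - 6 * ε) ≤ supD (ddist K) F hfn := by
        have hstep : ENNReal.ofReal (Ar - 6 * ε) ≤ ddist K (F pstar) (hfn pstar) := by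
          unfold ddist
          refine le_trans ?_ (le_iSup₂ (f := fun φ (_ : φ ∈ posQ X K) =>
            ENNReal.ofReal ((F pstar - hfn pstar) φ)) φstar hφstarmem)
          refine ENNReal.ofReal_le_ofReal ?_
          rw [ContinuousLinearMap.sub_apply]
          have he : (F pstar) φstar = φstar (f pstar) := NormedSpace.dual_def ℝ X _ _
          rw [he]; exact h8
        exact le_trans hstep (le_iSup (fun p => ddist K (F p) (hfn p)) pstar)
      calc A = ENNReal.ofReal ((Ar - 6 * ε) + 6 * ε) := by rw [hArofReal]; ring_nf
      _ ≤ ENNReal.ofReal (Ar - 6 * ε) + ENNReal.ofReal (6 * ε) := ENNReal.ofReal_add_le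
      _ ≤ supD (ddist K) F hfn + ENNReal.ofReal (6 * ε) := add_le_add h9 le_rfl
    refine ennreal_le_of_forall_eps fun ε hε => ?_
    have h1 := key (ε / 6) (by linarith)
    rwa [show 6 * (ε / 6) = ε by ring] at h1
  -- endgame
  have hLliminf : L ≤ liminfN r a := hconv.2 F hFmem
  have hlimsupL : limsupN r a ≤ L := by
    refine le_trans hcore ?_
    have h1 := supD_le_add (ddist K) (ddist_triangle' K) F l hfn
    rw [hlh, add_zero] at h1
    exact h1
  have hll := liminfN_le_limsupN' hdir a
  exact ⟨le_antisymm (le_trans hll hlimsupL) hLliminf,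
    le_antisymm hlimsupL (le_trans hLliminf hll)⟩
end

section
/- Let X be a preordered Banach space with X* = X*_+ − X*_+ (every continuous linear functional on X is a difference of two positive functionals). If x ∈ X** is such that the function φ ↦ x(φ) is continuous on Q = X^{*1}_+ with respect to the weak* topology, then x belongs to the canonical image of X in X**. -/
open TopologicalSpace ENNReal

set_option synthInstance.maxHeartbeats 1000000
set_option maxHeartbeats 2000000

section Stmt19Aux
open NormedSpace Filter Set Topology
open scoped Classical

variable {X : Type} [NormedAddCommGroup X] [NormedSpace ℝ X]

private lemma stmt19_posClosed (K : Set X) :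
    IsClosed {φ : WeakDual ℝ X | ∀ v ∈ K, 0 ≤ φ v} := by
  have : {φ : WeakDual ℝ X | ∀ v ∈ K, 0 ≤ φ v}
      = ⋂ v ∈ K, (fun φ : WeakDual ℝ X => φ v) ⁻¹' Ici 0 := by
    ext φ; simp [Set.mem_iInter]
  rw [this]
  exact isClosed_biInter fun v _ => (isClosed_Ici).preimage (WeakDual.eval_continuous v)

private lemma stmt19_posCompact (K : Set X) (r : ℝ) :
    IsCompact {φ : WeakDual ℝ X | (∀ v ∈ K, 0 ≤ φ v) ∧ ‖WeakDual.toStrongDual φ‖ ≤ r} := by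
  have h1 := WeakDual.isCompact_closedBall (𝕜 := ℝ) (E := X) 0 r
  have : {φ : WeakDual ℝ X | (∀ v ∈ K, 0 ≤ φ v) ∧ ‖WeakDual.toStrongDual φ‖ ≤ r}
      = {φ : WeakDual ℝ X | ∀ v ∈ K, 0 ≤ φ v} ∩
        (WeakDual.toStrongDual ⁻¹' Metric.closedBall 0 r) := by
    ext φ; simp [Metric.mem_closedBall, dist_zero_right]
  rw [this]
  exact h1.inter_left (stmt19_posClosed K)

/-- `Q` inside the weak dual. -/
def stmt19Qw (K : Set X) : Set (WeakDual ℝ X) :=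
  {φ : WeakDual ℝ X | (∀ v ∈ K, 0 ≤ φ v) ∧ ‖WeakDual.toStrongDual φ‖ ≤ 1}

private lemma stmt19_QwCompact (K : Set X) : IsCompact (stmt19Qw K) :=
  stmt19_posCompact K 1

private lemma stmt19_Fclosed (K : Set X) (r : ℝ) :
    IsClosed {φ : StrongDual ℝ X | ∃ ψ θ : StrongDual ℝ X, (∀ v ∈ K, 0 ≤ ψ v) ∧ (∀ v ∈ K, 0 ≤ θ v) ∧
      ‖ψ‖ ≤ r ∧ ‖θ‖ ≤ r ∧ φ = ψ - θ} := by
  set S : Set (WeakDual ℝ X) :=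
    {φ : WeakDual ℝ X | (∀ v ∈ K, 0 ≤ φ v) ∧ ‖WeakDual.toStrongDual φ‖ ≤ r} with hS
  have hSc : IsCompact S := stmt19_posCompact K r
  have hT : IsCompact ((fun p : WeakDual ℝ X × WeakDual ℝ X => p.1 - p.2) '' (S ×ˢ S)) :=
    (hSc.prod hSc).image (continuous_fst.sub continuous_snd)
  have hTc : IsClosed ((fun p : WeakDual ℝ X × WeakDual ℝ X => p.1 - p.2) '' (S ×ˢ S)) :=
    hT.isClosed
  have key : {φ : StrongDual ℝ X | ∃ ψ θ : StrongDual ℝ X, (∀ v ∈ K, 0 ≤ ψ v) ∧ (∀ v ∈ K, 0 ≤ θ v) ∧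
      ‖ψ‖ ≤ r ∧ ‖θ‖ ≤ r ∧ φ = ψ - θ}
      = StrongDual.toWeakDual ⁻¹'
        ((fun p : WeakDual ℝ X × WeakDual ℝ X => p.1 - p.2) '' (S ×ˢ S)) := by
    ext φ
    constructor
    · rintro ⟨ψ, θ, hψ, hθ, hnψ, hnθ, rfl⟩
      exact ⟨(ψ.toWeakDual, θ.toWeakDual), ⟨⟨hψ, hnψ⟩, ⟨hθ, hnθ⟩⟩, rfl⟩
    · rintro ⟨⟨ψ, θ⟩, ⟨⟨hψ, hnψ⟩, ⟨hθ, hnθ⟩⟩, h⟩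
      exact ⟨WeakDual.toStrongDual ψ, WeakDual.toStrongDual θ, hψ, hθ, hnψ, hnθ,
        congrArg WeakDual.toStrongDual h.symm⟩
  rw [key]
  exact hTc.preimage NormedSpace.Dual.toWeakDual_continuous

private lemma stmt19_decompBound [CompleteSpace X] (K : Set X)
    (hgen : ∀ φ : StrongDual ℝ X, ∃ ψ θ : StrongDual ℝ X,
      (∀ v ∈ K, 0 ≤ ψ v) ∧ (∀ v ∈ K, 0 ≤ θ v) ∧ φ = ψ - θ) :
    ∃ M : ℝ, 0 < M ∧ ∀ φ : StrongDual ℝ X, ‖φ‖ ≤ 1 → ∃ ψ θ : StrongDual ℝ X,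
      (∀ v ∈ K, 0 ≤ ψ v) ∧ (∀ v ∈ K, 0 ≤ θ v) ∧ ‖ψ‖ ≤ M ∧ ‖θ‖ ≤ M ∧ φ = ψ - θ := by
  set F : ℝ → Set (StrongDual ℝ X) := fun r =>
    {φ : StrongDual ℝ X | ∃ ψ θ : StrongDual ℝ X, (∀ v ∈ K, 0 ≤ ψ v) ∧ (∀ v ∈ K, 0 ≤ θ v) ∧
      ‖ψ‖ ≤ r ∧ ‖θ‖ ≤ r ∧ φ = ψ - θ} with hF
  have hUnion : (⋃ n : ℕ, F n) = univ := by
    ext φ; simp only [mem_iUnion, mem_univ, iff_true]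
    obtain ⟨ψ, θ, hψ, hθ, hd⟩ := hgen φ
    obtain ⟨n, hn⟩ := exists_nat_ge (max ‖ψ‖ ‖θ‖)
    exact ⟨n, ψ, θ, hψ, hθ, le_trans (le_max_left _ _) hn,
      le_trans (le_max_right _ _) hn, hd⟩
  obtain ⟨n, hn⟩ := nonempty_interior_of_iUnion_of_closed
    (fun n : ℕ => stmt19_Fclosed K n) hUnion
  obtain ⟨φ₀, hφ₀⟩ := hn
  obtain ⟨r, hr, hball⟩ := Metric.mem_nhds_iff.1 (mem_interior_iff_mem_nhds.1 hφ₀)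
  have hsmall : ∀ φ : StrongDual ℝ X, ‖φ‖ < r → φ ∈ F (2 * n) := by
    intro φ hφ
    have h1 : φ₀ + φ ∈ Metric.ball φ₀ r := by
      simp [Metric.mem_ball, dist_eq_norm, hφ]
    obtain ⟨ψ₁, θ₁, hψ₁, hθ₁, hn₁, hm₁, he₁⟩ := hball h1
    obtain ⟨ψ₀, θ₀, hψ₀, hθ₀, hn₀, hm₀, he₀⟩ := hball (Metric.mem_ball_self hr)
    refine ⟨ψ₁ + θ₀, θ₁ + ψ₀, fun v hv => add_nonneg (hψ₁ v hv) (hθ₀ v hv),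
      fun v hv => add_nonneg (hθ₁ v hv) (hψ₀ v hv), ?_, ?_, ?_⟩
    · calc ‖ψ₁ + θ₀‖ ≤ ‖ψ₁‖ + ‖θ₀‖ := norm_add_le _ _
        _ ≤ 2 * n := by linarith
    · calc ‖θ₁ + ψ₀‖ ≤ ‖θ₁‖ + ‖ψ₀‖ := norm_add_le _ _
        _ ≤ 2 * n := by linarith
    · have : φ = (φ₀ + φ) - φ₀ := by abel
      rw [this, he₁, he₀]; abel
  refine ⟨4 * n / r + 1, by positivity, fun φ hφ => ?_⟩
  have hφ' : ‖(r / 2) • φ‖ < r := by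
    rw [norm_smul, Real.norm_eq_abs, abs_of_pos (by linarith)]
    nlinarith [norm_nonneg φ]
  obtain ⟨ψ, θ, hψ, hθ, hnψ, hnθ, he⟩ := hsmall _ hφ'
  refine ⟨(2 / r) • ψ, (2 / r) • θ,
    fun v hv => mul_nonneg (by positivity) (hψ v hv),
    fun v hv => mul_nonneg (by positivity) (hθ v hv), ?_, ?_, ?_⟩
  · rw [norm_smul, Real.norm_eq_abs, abs_of_pos (by positivity)]
    calc (2 / r) * ‖ψ‖ ≤ (2 / r) * (2 * n) :=
          mul_le_mul_of_nonneg_left hnψ (by positivity)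
      _ = 4 * n / r := by ring
      _ ≤ 4 * n / r + 1 := by linarith
  · rw [norm_smul, Real.norm_eq_abs, abs_of_pos (by positivity)]
    calc (2 / r) * ‖θ‖ ≤ (2 / r) * (2 * n) :=
          mul_le_mul_of_nonneg_left hnθ (by positivity)
      _ = 4 * n / r := by ring
      _ ≤ 4 * n / r + 1 := by linarith
  · have : φ = (2 / r) • ((r / 2) • φ) := by
      rw [smul_smul]; field_simp; rw [one_smul]
    rw [this, he, smul_sub]

private lemma stmt19_contTransfer (K : Set X) (x : Bidual X)
    (hx : @Continuous (posQ X K) ℝ (qTop X K) _ fun φ => x φ.1) :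
    Continuous fun φ : stmt19Qw K => x (WeakDual.toStrongDual φ.1) := by
  have h1 : @Continuous (stmt19Qw K) (posQ X K) _ (qTop X K)
      (fun φ => ⟨WeakDual.toStrongDual φ.1, φ.2.2, φ.2.1⟩) := by
    unfold qTop
    exact continuous_induced_rng.2 <|
      (WeakDual.coeFn_continuous (𝕜 := ℝ) (E := X)).comp continuous_subtype_val
  exact @Continuous.comp (stmt19Qw K) (posQ X K) ℝ _ (qTop X K) _ _ _ hx h1

private lemma stmt19_smallOnBasic (K : Set X) (x : StrongDual ℝ (StrongDual ℝ X))
    (hxc : Continuous fun φ : stmt19Qw K => x (WeakDual.toStrongDual φ.1))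
    {M : ℝ} (hM : 0 < M)
    (hdec : ∀ φ : StrongDual ℝ X, ‖φ‖ ≤ 1 → ∃ ψ θ : StrongDual ℝ X,
      (∀ v ∈ K, 0 ≤ ψ v) ∧ (∀ v ∈ K, 0 ≤ θ v) ∧ ‖ψ‖ ≤ M ∧ ‖θ‖ ≤ M ∧ φ = ψ - θ)
    {ε : ℝ} (hε : 0 < ε) :
    ∃ (s : Finset X) (δ : ℝ), 0 < δ ∧ ∀ φ : StrongDual ℝ X, ‖φ‖ ≤ 1 →
      (∀ a ∈ s, |φ a| < δ) → |x φ| ≤ ε := by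
  by_contra hcon
  push_neg at hcon
  set ι : Type := Finset X × {δ : ℝ // 0 < δ} with hι
  haveI : Nonempty ι := ⟨⟨∅, ⟨1, one_pos⟩⟩⟩
  set B : ι → Set (WeakDual ℝ X) := fun i =>
    {φ : WeakDual ℝ X | ‖WeakDual.toStrongDual φ‖ ≤ 1 ∧ (∀ a ∈ i.1, |φ a| < i.2.1) ∧
      ε < |x (WeakDual.toStrongDual φ)|} with hB
  have hBne : ∀ i, (B i).Nonempty := by
    rintro ⟨s, δ, hδ⟩
    obtain ⟨φ, h1, h2, h3⟩ := hcon s δ hδ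
    exact ⟨φ.toWeakDual, h1, h2, h3⟩
  set F : Filter (WeakDual ℝ X) := ⨅ i, 𝓟 (B i) with hF
  have hdir : Directed (· ≥ ·) fun i => (𝓟 (B i) : Filter (WeakDual ℝ X)) := by
    rintro ⟨s, δ, hδ⟩ ⟨t, η, hη⟩
    refine ⟨⟨s ∪ t, ⟨min δ η, lt_min hδ hη⟩⟩, ?_, ?_⟩ <;>
      refine principal_mono.2 fun φ hφ => ⟨hφ.1, fun a ha => ?_, hφ.2.2⟩
    · exact lt_of_lt_of_le (hφ.2.1 a (Finset.mem_union_left _ ha)) (min_le_left _ _)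
    · exact lt_of_lt_of_le (hφ.2.1 a (Finset.mem_union_right _ ha)) (min_le_right _ _)
  haveI hFne : F.NeBot := iInf_neBot_of_directed hdir fun i => principal_neBot_iff.2 (hBne i)
  have hBF : ∀ i, B i ∈ F := fun i => mem_iInf_of_mem i (mem_principal_self _)
  have htend0 : Tendsto (fun φ : WeakDual ℝ X => φ) F (𝓝 0) := by
    rw [tendsto_iff_forall_eval_tendsto_topDualPairing]
    intro a
    change Tendsto (fun φ : WeakDual ℝ X => φ a) F (𝓝 0)
    rw [Metric.tendsto_nhds]
    intro η hη
    filter_upwards [hBF ⟨{a}, ⟨η, hη⟩⟩] with φ hφ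
    simpa [Real.dist_eq] using hφ.2.1 a (Finset.mem_singleton_self a)
  have h0Q : (0 : WeakDual ℝ X) ∈ stmt19Qw K := by
    constructor
    · intro v _; exact le_of_eq rfl
    · simp
  have hsel : ∀ φ : WeakDual ℝ X, ∃ p : WeakDual ℝ X × WeakDual ℝ X,
      p.1 ∈ stmt19Qw K ∧ p.2 ∈ stmt19Qw K ∧ (‖WeakDual.toStrongDual φ‖ ≤ 1 →
        WeakDual.toStrongDual φ
          = M • WeakDual.toStrongDual p.1 - M • WeakDual.toStrongDual p.2) := by
    intro φ
    by_cases h : ‖WeakDual.toStrongDual φ‖ ≤ 1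
    · obtain ⟨ψ, θ, hψ, hθ, hnψ, hnθ, he⟩ := hdec _ h
      have hnorm : ∀ χ : StrongDual ℝ X, ‖χ‖ ≤ M → ‖M⁻¹ • χ‖ ≤ 1 := by
        intro χ hχ
        rw [norm_smul, Real.norm_eq_abs, abs_of_pos (by positivity)]
        rw [inv_mul_le_iff₀ hM, mul_one]; exact hχ
      refine ⟨((M⁻¹ • ψ).toWeakDual, (M⁻¹ • θ).toWeakDual),
        ⟨fun v hv => ?_, hnorm ψ hnψ⟩, ⟨fun v hv => ?_, hnorm θ hnθ⟩, fun _ => ?_⟩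
      · exact mul_nonneg (by positivity) (hψ v hv)
      · exact mul_nonneg (by positivity) (hθ v hv)
      · show WeakDual.toStrongDual φ = M • (M⁻¹ • ψ) - M • (M⁻¹ • θ)
        rw [smul_smul, smul_smul, mul_inv_cancel₀ (ne_of_gt hM), one_smul, one_smul]
        exact he
    · exact ⟨(0, 0), h0Q, h0Q, fun h' => absurd h' h⟩
  choose P hP1 hP2 hP3 using hsel
  set G : Filter (WeakDual ℝ X × WeakDual ℝ X) := map P F with hG
  have hGS : G ≤ 𝓟 (stmt19Qw K ×ˢ stmt19Qw K) := by
    rw [le_principal_iff, hG, mem_map]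
    have : P ⁻¹' (stmt19Qw K ×ˢ stmt19Qw K) = univ :=
      eq_univ_of_forall fun φ => ⟨hP1 φ, hP2 φ⟩
    rw [this]; exact univ_mem
  haveI : G.NeBot := map_neBot
  obtain ⟨⟨u, v⟩, huv, hcl⟩ :=
    ((stmt19_QwCompact K).prod (stmt19_QwCompact K)).exists_clusterPt hGS
  have hc : Continuous fun p : WeakDual ℝ X × WeakDual ℝ X => M • p.1 - M • p.2 :=
    (continuous_fst.const_smul M).sub (continuous_snd.const_smul M)
  have hev : ∀ᶠ φ in F,
      (fun p : WeakDual ℝ X × WeakDual ℝ X => M • p.1 - M • p.2) (P φ) = φ := by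
    filter_upwards [hBF ⟨∅, ⟨1, one_pos⟩⟩] with φ hφ
    have := hP3 φ hφ.1
    have : WeakDual.toStrongDual (M • (P φ).1 - M • (P φ).2) = WeakDual.toStrongDual φ := by
      rw [map_sub, map_smul, map_smul]; exact this.symm
    exact (WeakDual.toStrongDual_inj _ _).1 this
  have hmapc : map (fun p : WeakDual ℝ X × WeakDual ℝ X => M • p.1 - M • p.2) G = F := by
    rw [hG, map_map]
    calc map (fun φ => M • (P φ).1 - M • (P φ).2) F = map id F :=
          map_congr (by filter_upwards [hev] with φ h; exact h)
      _ = F := map_id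
  have hclc : ClusterPt (M • u - M • v) F := by
    rw [← hmapc]
    exact hcl.map hc.continuousAt tendsto_map
  have huv_eq : u = v := by
    have h0 : M • u - M • v = 0 := by
      by_contra hne
      haveI hclc' : NeBot (𝓝 (M • u - M • v) ⊓ F) := hclc
      have h1 : NeBot (𝓝 (M • u - M • v) ⊓ 𝓝 (0 : WeakDual ℝ X)) := by
        refine neBot_of_le (f := 𝓝 (M • u - M • v) ⊓ F) ?_
        exact inf_le_inf_left _ htend0
      exact hne (t2_iff_nhds.1 inferInstance h1)
    have : M • u = M • v := by rwa [sub_eq_zero] at h0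
    have := congrArg (fun w : WeakDual ℝ X => M⁻¹ • w) this
    simpa [smul_smul, inv_mul_cancel₀ (ne_of_gt hM)] using this
  set g : WeakDual ℝ X × WeakDual ℝ X → ℝ := fun p =>
    x (WeakDual.toStrongDual p.1) - x (WeakDual.toStrongDual p.2) with hgdef
  have hgon : ContinuousOn g (stmt19Qw K ×ˢ stmt19Qw K) := by
    have hf : ContinuousOn (fun φ : WeakDual ℝ X => x (WeakDual.toStrongDual φ))
        (stmt19Qw K) := continuousOn_iff_continuous_restrict.2 hxc
    exact ((hf.comp continuousOn_fst fun p hp => hp.1).sub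
      (hf.comp continuousOn_snd fun p hp => hp.2))
  have hgcl : ClusterPt (g (u, v)) (map g G) := by
    have hne : NeBot (𝓝 (u, v) ⊓ G) := hcl
    have hle : 𝓝 (u, v) ⊓ G ≤ 𝓝[stmt19Qw K ×ˢ stmt19Qw K] (u, v) := by
      rw [nhdsWithin]
      exact inf_le_inf_left _ hGS
    have hle2 : map g (𝓝 (u, v) ⊓ G) ≤ 𝓝 (g (u, v)) ⊓ map g G :=
      le_inf (le_trans (map_mono hle) (hgon (u, v) huv)) (map_mono inf_le_right)
    exact neBot_of_le hle2
  have hT : {t : ℝ | ε / M ≤ |t|} ∈ map g G := by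
    rw [hG, map_map, mem_map]
    refine mem_of_superset (hBF ⟨∅, ⟨1, one_pos⟩⟩) fun φ hφ => ?_
    have hdecφ := hP3 φ hφ.1
    have hxφ : x (WeakDual.toStrongDual φ) = M * g (P φ) := by
      rw [hdecφ, map_sub, map_smul, map_smul, hgdef]
      simp [mul_sub]
    have : ε < |M * g (P φ)| := by rw [← hxφ]; exact hφ.2.2
    rw [abs_mul, abs_of_pos hM] at this
    show ε / M ≤ |g (P φ)|
    rw [div_le_iff₀' hM]
    exact le_of_lt this
  have hmem : g (u, v) ∈ {t : ℝ | ε / M ≤ |t|} := by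
    have hclosed : IsClosed {t : ℝ | ε / M ≤ |t|} :=
      isClosed_Ici.preimage continuous_abs
    have : ClusterPt (g (u, v)) (𝓟 {t : ℝ | ε / M ≤ |t|}) :=
      hgcl.mono (le_principal_iff.2 hT)
    exact hclosed.closure_subset (mem_closure_iff_clusterPt.2 this)
  rw [huv_eq] at hmem
  simp only [hgdef, mem_setOf_eq, sub_self, abs_zero] at hmem
  exact absurd hmem (not_le.2 (div_pos hε hM))

private lemma stmt19_approxStep [CompleteSpace X] (x : StrongDual ℝ (StrongDual ℝ X))
    (hsmall : ∀ ε : ℝ, 0 < ε → ∃ (s : Finset X) (δ : ℝ), 0 < δ ∧ ∀ φ : StrongDual ℝ X, ‖φ‖ ≤ 1 →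
      (∀ a ∈ s, |φ a| < δ) → |x φ| ≤ ε) :
    ∃ a : X, x = inclusionInDoubleDual ℝ X a := by
  set J := inclusionInDoubleDual ℝ X with hJ
  have hclosed : IsClosed (Set.range J) := by
    have h2 : Set.range J = Set.range (inclusionInDoubleDualLi ℝ (E := X)) := rfl
    rw [h2]
    exact ((inclusionInDoubleDualLi ℝ
      (E := X)).isometry.isUniformInducing.isComplete_range).isClosed
  have key : ∀ ε : ℝ, 0 < ε → ∃ y ∈ Set.range J, ‖x - y‖ ≤ ε := by
    intro ε hε
    obtain ⟨s, δ, hδ, hs⟩ := hsmall ε hε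
    set ι := {a : X // a ∈ s} with hι
    set L : ι → (StrongDual ℝ X) →ₗ[ℝ] ℝ := fun a =>
      (J a.1 : StrongDual ℝ X →L[ℝ] ℝ).toLinearMap with hL
    set W : Submodule ℝ (StrongDual ℝ X) := ⨅ i : ι, LinearMap.ker (L i) with hW
    have hWmem : ∀ φ : StrongDual ℝ X, φ ∈ W ↔ ∀ a ∈ s, φ a = 0 := by
      intro φ
      simp only [hW, Submodule.mem_iInf, LinearMap.mem_ker, hL]
      constructor
      · intro h a ha; exact h ⟨a, ha⟩
      · rintro h ⟨a, ha⟩; exact h a ha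
    have hWle : ∀ φ ∈ W, |x φ| ≤ ε * ‖φ‖ := by
      intro φ hφ
      rcases eq_or_ne φ 0 with rfl | hne
      · simp
      · have hn : 0 < ‖φ‖ := norm_pos_iff.2 hne
        have h1 : ‖(‖φ‖⁻¹ : ℝ) • φ‖ ≤ 1 := by
          rw [norm_smul, Real.norm_eq_abs, abs_of_pos (by positivity),
            inv_mul_cancel₀ hn.ne']
        have h2 : ∀ a ∈ s, |((‖φ‖⁻¹ : ℝ) • φ) a| < δ := by
          intro a ha
          rw [ContinuousLinearMap.smul_apply, (hWmem φ).1 hφ a ha]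
          simpa using hδ
        have h3 := hs _ h1 h2
        rw [map_smul, smul_eq_mul, abs_mul, abs_of_pos (by positivity)] at h3
        rw [inv_mul_le_iff₀ hn] at h3
        linarith [h3]
    set f := LinearMap.mkContinuous (x.toLinearMap.comp W.subtype) ε
      (fun (φ : W) => by simpa [Real.norm_eq_abs] using hWle φ.1 φ.2) with hf
    obtain ⟨g, hg, hgnorm⟩ := exists_extension_norm_eq W f
    have hker : ⨅ i : ι, LinearMap.ker (L i)
        ≤ LinearMap.ker (x - g : StrongDual ℝ (StrongDual ℝ X)).toLinearMap := by
      intro φ hφ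
      have : g φ = x φ := by
        have := hg ⟨φ, hφ⟩
        simpa [hf] using this
      simp [LinearMap.mem_ker, this]
    have hspan := mem_span_of_iInf_ker_le_ker (𝕜 := ℝ) (L := L) hker
    obtain ⟨c, hc⟩ := (Finsupp.mem_span_range_iff_exists_finsupp).1 hspan
    set a : X := ∑ i ∈ c.support, c i • (i.1 : X) with ha
    have hJa : ((J a : StrongDual ℝ X →L[ℝ] ℝ) : StrongDual ℝ X →ₗ[ℝ] ℝ)
        = (x - g : StrongDual ℝ (StrongDual ℝ X)).toLinearMap := by
      rw [← hc, Finsupp.sum, ha, map_sum, ContinuousLinearMap.coe_sum]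
      refine Finset.sum_congr rfl fun i _ => ?_
      rw [map_smul, ContinuousLinearMap.coe_smul]
    have hxg : J a = x - g := ContinuousLinearMap.coe_injective hJa
    refine ⟨J a, Set.mem_range_self a, ?_⟩
    have hx2 : x - J a = g := by rw [hxg]; abel
    rw [hx2, hgnorm]; exact LinearMap.mkContinuous_norm_le _ hε.le _
  have : x ∈ closure (Set.range J) := by
    refine (Metric.mem_closure_iff (α := StrongDual ℝ (StrongDual ℝ X))).2 ?_
    intro ε hε
    obtain ⟨y, hy, hxy⟩ := key (ε / 2) (by linarith)
    exact ⟨y, hy, lt_of_eq_of_lt (dist_eq_norm x y) (by linarith)⟩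
  obtain ⟨a, ha⟩ := hclosed.closure_subset this
  exact ⟨a, ha.symm⟩

end Stmt19Aux

/-- if `X* = X*_+ - X*_+` and `x ∈ X**` restricts to a weak*-continuous
function on `Q = X^{*1}_+`, then `x` lies in the canonical image of `X` in `X**`. -/
theorem stmt19 (X : Type) [NormedAddCommGroup X] [NormedSpace ℝ X] [CompleteSpace X]
    (K : Set X) (hK : IsGoodCone X K)
    (hgen : ∀ φ : StrongDual ℝ X, ∃ ψ θ : StrongDual ℝ X,
      (∀ v ∈ K, 0 ≤ ψ v) ∧ (∀ v ∈ K, 0 ≤ θ v) ∧ φ = ψ - θ)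
    (x : Bidual X)
    (hx : @Continuous (posQ X K) ℝ (qTop X K) _ fun φ => x φ.1) :
    ∃ a : X, x = NormedSpace.inclusionInDoubleDual ℝ X a := by
  obtain ⟨M, hM, hdec⟩ := stmt19_decompBound K hgen
  have hxc := stmt19_contTransfer K x hx
  have hsmall : ∀ ε : ℝ, 0 < ε → ∃ (s : Finset X) (δ : ℝ), 0 < δ ∧
      ∀ φ : StrongDual ℝ X, ‖φ‖ ≤ 1 → (∀ a ∈ s, |φ a| < δ) → |x φ| ≤ ε :=
    fun ε hε => stmt19_smallOnBasic K x hxc hM hdec hε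
  exact stmt19_approxStep x hsmall
end
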